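/- arXiv:1311.2285 — 7 statements merged into one kernel-verified Lean document; each statement's English description precedes it below -/
import Mathlib

section
/- Let H be a set of infinite regular cardinals with ω ∈ H. Then for every GO space X: X is [ν,ν]-compact for every ν ∈ H if and only if X has no gap and no pseudo-gap whose type belongs to H. -/
universe u v

open Set Cardinal Filter Topology TopologicalSpace

section Defs

variable {X : Type u} [LinearOrder X]

/-- A subset `Y` of a linear order `X`, having no maximum, is `lam`-full in `X` on the right
if for every `y ∈ Y` the set `⋃ y' ∈ Y, (y, y')` (intervals computed in `X`)
has cardinality at least `lam`. -/
def FullRight (lam : Cardinal.{u}) (Y : Set X) : Prop :=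
  (¬ ∃ m ∈ Y, ∀ y ∈ Y, y ≤ m) ∧
    ∀ y ∈ Y, lam ≤ #(⋃ y' ∈ Y, Ioo y y')

/-- A subset `Y` of a linear order `X`, having no minimum, is `lam`-full in `X` on the left
if for every `y ∈ Y` the set `⋃ y' ∈ Y, (y', y)` (intervals computed in `X`)
has cardinality at least `lam`. -/
def FullLeft (lam : Cardinal.{u}) (Y : Set X) : Prop :=
  (¬ ∃ m ∈ Y, ∀ y ∈ Y, m ≤ y) ∧
    ∀ y ∈ Y, lam ≤ #(⋃ y' ∈ Y, Ioo y' y)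

/-- The pair `(A, B)` is a gap of the space `X`: `A`, `B` are open, `A ∪ B = X`,
every element of `A` is less than every element of `B`, `A` has no maximum and `B` has
no minimum (`A` or `B` may be empty). -/
def IsGap [TopologicalSpace X] (A B : Set X) : Prop :=
  IsOpen A ∧ IsOpen B ∧ A ∪ B = Set.univ ∧ (∀ a ∈ A, ∀ b ∈ B, a < b) ∧
    (¬ ∃ m ∈ A, ∀ a ∈ A, a ≤ m) ∧ (¬ ∃ m ∈ B, ∀ b ∈ B, m ≤ b)

/-- The pair `(A, B)` is a pseudo-gap of the space `X`: `A`, `B` are open and nonempty,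
`A ∪ B = X`, every element of `A` is less than every element of `B`, and either `A` has a
maximum and `B` has no minimum, or `A` has no maximum and `B` has a minimum. -/
def IsPseudoGap [TopologicalSpace X] (A B : Set X) : Prop :=
  IsOpen A ∧ IsOpen B ∧ A ∪ B = Set.univ ∧ (∀ a ∈ A, ∀ b ∈ B, a < b) ∧
    A.Nonempty ∧ B.Nonempty ∧
    (((∃ m ∈ A, ∀ a ∈ A, a ≤ m) ∧ ¬ ∃ m ∈ B, ∀ b ∈ B, m ≤ b) ∨
      ((¬ ∃ m ∈ A, ∀ a ∈ A, a ≤ m) ∧ ∃ m ∈ B, ∀ b ∈ B, m ≤ b))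

/-- The cofinality of `A`: the least cardinality of a subset of `A` cofinal in `A`. -/
noncomputable def cofinCard (A : Set X) : Cardinal.{u} :=
  sInf {c | ∃ S : Set X, S ⊆ A ∧ (∀ a ∈ A, ∃ s ∈ S, a ≤ s) ∧ c = #S}

/-- The coinitiality of `B`: the least cardinality of a subset of `B` coinitial in `B`. -/
noncomputable def coinitCard (B : Set X) : Cardinal.{u} :=
  sInf {c | ∃ S : Set X, S ⊆ B ∧ (∀ b ∈ B, ∃ s ∈ S, s ≤ b) ∧ c = #S}

/-- `mu` is a type of the gap `(A, B)`: `mu` is the cofinality of `A` or the coinitiality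
of `B`. -/
def IsGapType (mu : Cardinal.{u}) (A B : Set X) : Prop :=
  mu = cofinCard A ∨ mu = coinitCard B

/-- `mu` is the type of the pseudo-gap `(A, B)`: the cofinality of `A` if `B` has a minimum,
the coinitiality of `B` if `A` has a maximum. -/
def IsPseudoGapType (mu : Cardinal.{u}) (A B : Set X) : Prop :=
  ((∃ m ∈ B, ∀ b ∈ B, m ≤ b) ∧ mu = cofinCard A) ∨
    ((∃ m ∈ A, ∀ a ∈ A, a ≤ m) ∧ mu = coinitCard B)

end Defs

/-- A topological space is `[ν, ν]`-compact if every open cover of cardinality at most `ν`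
has a subcover of cardinality less than `ν`. -/
def NuNuCompact (X : Type u) [TopologicalSpace X] (ν : Cardinal.{u}) : Prop :=
  ∀ 𝒰 : Set (Set X), (∀ U ∈ 𝒰, IsOpen U) → ⋃₀ 𝒰 = Set.univ → #𝒰 ≤ ν →
    ∃ 𝒱 ⊆ 𝒰, #𝒱 < ν ∧ ⋃₀ 𝒱 = Set.univ

/-- A topological space is weakly `[ν, ν]`-compact if every open cover of cardinality at
most `ν` has a subfamily of cardinality less than `ν` whose union is dense. -/
def WeakNuNuCompact (X : Type u) [TopologicalSpace X] (ν : Cardinal.{u}) : Prop :=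
  ∀ 𝒰 : Set (Set X), (∀ U ∈ 𝒰, IsOpen U) → ⋃₀ 𝒰 = Set.univ → #𝒰 ≤ ν →
    ∃ 𝒱 ⊆ 𝒰, #𝒱 < ν ∧ Dense (⋃₀ 𝒱)

/-- A topological space is initially `lam`-compact if every open cover of cardinality at
most `lam` has a finite subcover. -/
def InitiallyCompact (X : Type u) [TopologicalSpace X] (lam : Cardinal.{u}) : Prop :=
  ∀ 𝒰 : Set (Set X), (∀ U ∈ 𝒰, IsOpen U) → ⋃₀ 𝒰 = Set.univ → #𝒰 ≤ lam →
    ∃ 𝒱 ⊆ 𝒰, 𝒱.Finite ∧ ⋃₀ 𝒱 = Set.univ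

/-- A topological space is weakly initially `lam`-compact if every open cover of cardinality
at most `lam` has a finite subfamily whose union is dense. -/
def WeakInitiallyCompact (X : Type u) [TopologicalSpace X] (lam : Cardinal.{u}) : Prop :=
  ∀ 𝒰 : Set (Set X), (∀ U ∈ 𝒰, IsOpen U) → ⋃₀ 𝒰 = Set.univ → #𝒰 ≤ lam →
    ∃ 𝒱 ⊆ 𝒰, 𝒱.Finite ∧ Dense (⋃₀ 𝒱)

/-- The sequence `x` `D`-converges to `p`: for every open neighbourhood `U` of `p`,
`{i | x i ∈ U} ∈ D`. -/
def DConv {I : Type v} {X : Type u} [TopologicalSpace X] (D : Ultrafilter I)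
    (x : I → X) (p : X) : Prop :=
  ∀ U : Set X, IsOpen U → p ∈ U → {i | x i ∈ U} ∈ D

/-- `X` is `D`-compact: every `I`-indexed sequence of elements of `X` `D`-converges to some
point of `X`. -/
def DCompact {I : Type v} (D : Ultrafilter I) (X : Type u) [TopologicalSpace X] : Prop :=
  ∀ x : I → X, ∃ p : X, DConv D x p

/-- `p` is a `D`-limit point of the sequence of sets `Y`: for every neighbourhood `U`
of `p`, `{i | U ∩ Y i ≠ ∅} ∈ D`. -/
def DLimitPt {I : Type v} {X : Type u} [TopologicalSpace X] (D : Ultrafilter I)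
    (Y : I → Set X) (p : X) : Prop :=
  ∀ U ∈ nhds p, {i | (U ∩ Y i).Nonempty} ∈ D

/-- `X` is `D`-pseudocompact: every `I`-indexed sequence of nonempty open sets of `X` has a
`D`-limit point. -/
def DPseudocompact {I : Type v} (D : Ultrafilter I) (X : Type u) [TopologicalSpace X] : Prop :=
  ∀ O : I → Set X, (∀ i, IsOpen (O i)) → (∀ i, (O i).Nonempty) → ∃ p : X, DLimitPt D O p

/-- The ultrafilter `D` is `ν`-decomposable: there is `f : I → ν` such that the preimage of
every subset of `ν` of cardinality less than `ν` is not in `D`. -/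
def Decomposable {I : Type v} (D : Ultrafilter I) (ν : Cardinal.{u}) : Prop :=
  ∃ f : I → ν.ord.ToType, ∀ S : Set ν.ord.ToType, #S < ν → f ⁻¹' S ∉ D

section AuxGO

variable {X : Type u} [LinearOrder X] [TopologicalSpace X] [T2Space X]
variable {𝓑 : Set (Set X)}

theorem go_isOpen_Ioi (hB : IsTopologicalBasis 𝓑) (hc : ∀ s ∈ 𝓑, s.OrdConnected) (a : X) :
    IsOpen (Ioi a) := by
  rw [isOpen_iff_forall_mem_open]
  intro p hp
  obtain ⟨U, V, hU, hV, hpU, haV, hUV⟩ := t2_separation (ne_of_gt hp)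
  obtain ⟨W, hW𝓑, hpW, hWU⟩ := hB.exists_subset_of_mem_open hpU hU
  refine ⟨W, fun w hw => ?_, hB.isOpen hW𝓑, hpW⟩
  rw [mem_Ioi]
  by_contra hwa
  push_neg at hwa
  have haW : a ∈ W := (hc W hW𝓑).out hw hpW ⟨hwa, le_of_lt hp⟩
  exact hUV.le_bot ⟨hWU haW, haV⟩

theorem go_isOpen_Iio (hB : IsTopologicalBasis 𝓑) (hc : ∀ s ∈ 𝓑, s.OrdConnected) (a : X) :
    IsOpen (Iio a) := by
  rw [isOpen_iff_forall_mem_open]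
  intro p hp
  obtain ⟨U, V, hU, hV, hpU, haV, hUV⟩ := t2_separation (ne_of_lt hp)
  obtain ⟨W, hW𝓑, hpW, hWU⟩ := hB.exists_subset_of_mem_open hpU hU
  refine ⟨W, fun w hw => ?_, hB.isOpen hW𝓑, hpW⟩
  rw [mem_Iio]
  by_contra hwa
  push_neg at hwa
  have haW : a ∈ W := (hc W hW𝓑).out hpW hw ⟨le_of_lt hp, hwa⟩
  exact hUV.le_bot ⟨hWU haW, haV⟩

end AuxGO

section AuxCard

variable {X : Type u} [LinearOrder X]

theorem cofinCard_spec (A : Set X) :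
    ∃ S : Set X, S ⊆ A ∧ (∀ a ∈ A, ∃ s ∈ S, a ≤ s) ∧ #S = cofinCard A := by
  have hne : {c | ∃ S : Set X, S ⊆ A ∧ (∀ a ∈ A, ∃ s ∈ S, a ≤ s) ∧ c = #S}.Nonempty :=
    ⟨#A, A, Subset.rfl, fun a ha => ⟨a, ha, le_rfl⟩, rfl⟩
  obtain ⟨S, h1, h2, h3⟩ := csInf_mem hne
  exact ⟨S, h1, h2, h3.symm⟩

theorem coinitCard_spec (B : Set X) :
    ∃ S : Set X, S ⊆ B ∧ (∀ b ∈ B, ∃ s ∈ S, s ≤ b) ∧ #S = coinitCard B := by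
  have hne : {c | ∃ S : Set X, S ⊆ B ∧ (∀ b ∈ B, ∃ s ∈ S, s ≤ b) ∧ c = #S}.Nonempty :=
    ⟨#B, B, Subset.rfl, fun b hb => ⟨b, hb, le_rfl⟩, rfl⟩
  obtain ⟨S, h1, h2, h3⟩ := csInf_mem hne
  exact ⟨S, h1, h2, h3.symm⟩

theorem cofinCard_le {A S : Set X} (h1 : S ⊆ A) (h2 : ∀ a ∈ A, ∃ s ∈ S, a ≤ s) :
    cofinCard A ≤ #S :=
  csInf_le' ⟨S, h1, h2, rfl⟩

theorem coinitCard_le {B S : Set X} (h1 : S ⊆ B) (h2 : ∀ b ∈ B, ∃ s ∈ S, s ≤ b) :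
    coinitCard B ≤ #S :=
  csInf_le' ⟨S, h1, h2, rfl⟩

theorem le_cofinCard {A : Set X} {ν : Cardinal.{u}}
    (h : ∀ S : Set X, S ⊆ A → (∀ a ∈ A, ∃ s ∈ S, a ≤ s) → ν ≤ #S) : ν ≤ cofinCard A := by
  obtain ⟨S, h1, h2, h3⟩ := cofinCard_spec A
  exact h3 ▸ h S h1 h2

theorem le_coinitCard {B : Set X} {ν : Cardinal.{u}}
    (h : ∀ S : Set X, S ⊆ B → (∀ b ∈ B, ∃ s ∈ S, s ≤ b) → ν ≤ #S) : ν ≤ coinitCard B := by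
  obtain ⟨S, h1, h2, h3⟩ := coinitCard_spec B
  exact h3 ▸ h S h1 h2

end AuxCard

theorem mk_biUnion_lt {β γ : Type u} {ν : Cardinal.{u}} (hν : ν.IsRegular) {T : Set β}
    {f : β → Set γ} (hT : #T < ν) (hf : ∀ t ∈ T, #(f t) < ν) : #(⋃ t ∈ T, f t) < ν := by
  rw [Set.biUnion_eq_iUnion]
  calc #(⋃ t : T, f t) ≤ Cardinal.sum (fun t : T => #(f t)) := Cardinal.mk_iUnion_le_sum_mk
    _ < ν := Cardinal.sum_lt_of_isRegular hν hT fun t => hf t t.2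
section Easy

variable {X : Type u} [LinearOrder X] [TopologicalSpace X] [T2Space X]
variable {𝓑 : Set (Set X)}

theorem notNuNu_right (hB : IsTopologicalBasis 𝓑) (hc : ∀ s ∈ 𝓑, s.OrdConnected)
    {A B : Set X} (hBopen : IsOpen B) (hunion : A ∪ B = Set.univ)
    (hAB : ∀ a ∈ A, ∀ b ∈ B, a < b) (hnomax : ¬ ∃ m ∈ A, ∀ a ∈ A, a ≤ m)
    {μ : Cardinal.{u}} (hμ : μ.IsRegular) (hμA : μ = cofinCard A) :
    ¬ NuNuCompact X μ := by
  intro hcompact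
  obtain ⟨S, hSA, hScof, hScard⟩ := cofinCard_spec A
  have hScard' : #S = μ := hScard.trans hμA.symm
  set 𝒰 : Set (Set X) := insert B (Iio '' S) with h𝒰
  have hopen : ∀ U ∈ 𝒰, IsOpen U := by
    rintro U (rfl | ⟨s, hs, rfl⟩)
    · exact hBopen
    · exact go_isOpen_Iio hB hc s
  have hcover : ⋃₀ 𝒰 = Set.univ := by
    apply eq_univ_of_forall
    intro p
    rcases (hunion.symm ▸ Set.mem_univ p : p ∈ A ∪ B) with hpA | hpB
    · push_neg at hnomax
      obtain ⟨a, haA, hpa⟩ := hnomax p hpA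
      obtain ⟨s, hsS, has⟩ := hScof a haA
      exact ⟨Iio s, Set.mem_insert_of_mem _ ⟨s, hsS, rfl⟩, lt_of_lt_of_le hpa has⟩
    · exact ⟨B, Set.mem_insert _ _, hpB⟩
  have hcard : #𝒰 ≤ μ := by
    calc #𝒰 ≤ #(Iio '' S : Set (Set X)) + 1 := Cardinal.mk_insert_le
      _ ≤ #S + 1 := add_le_add_left Cardinal.mk_image_le 1
      _ = μ + 1 := by rw [hScard']
      _ = μ := Cardinal.add_one_eq hμ.aleph0_le
  obtain ⟨𝒱, h𝒱𝒰, h𝒱card, h𝒱cover⟩ := hcompact 𝒰 hopen hcover hcard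
  set S' : Set X := {s ∈ S | Iio s ∈ 𝒱} with hS'
  have hS'card : #S' < μ := by
    refine lt_of_le_of_lt ?_ h𝒱card
    refine Cardinal.mk_le_of_injective (f := fun s => (⟨Iio s.1, s.2.2⟩ : 𝒱)) ?_
    intro s₁ s₂ h
    have h' : Iio s₁.1 = Iio s₂.1 := congrArg Subtype.val h
    rcases lt_trichotomy s₁.1 s₂.1 with hlt | heq | hlt
    · exact absurd (h' ▸ hlt : s₁.1 ∈ Iio s₁.1) (lt_irrefl _)
    · exact Subtype.ext heq
    · exact absurd (h'.symm ▸ hlt : s₂.1 ∈ Iio s₂.1) (lt_irrefl _)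
  have hnotcof : ¬ ∀ a ∈ A, ∃ s ∈ S', a ≤ s := by
    intro hcof
    exact absurd (hμA ▸ cofinCard_le (fun s hs => hSA hs.1) hcof) (not_le.mpr hS'card)
  push_neg at hnotcof
  obtain ⟨a, haA, ha⟩ := hnotcof
  obtain ⟨V, hV𝒱, haV⟩ := h𝒱cover.symm ▸ Set.mem_univ a
  rcases h𝒱𝒰 hV𝒱 with rfl | ⟨s, hsS, rfl⟩
  · exact lt_irrefl a (hAB a haA a haV)
  · exact lt_asymm haV (ha s ⟨hsS, hV𝒱⟩)

theorem notNuNu_left (hB : IsTopologicalBasis 𝓑) (hc : ∀ s ∈ 𝓑, s.OrdConnected)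
    {A B : Set X} (hAopen : IsOpen A) (hunion : A ∪ B = Set.univ)
    (hAB : ∀ a ∈ A, ∀ b ∈ B, a < b) (hnomin : ¬ ∃ m ∈ B, ∀ b ∈ B, m ≤ b)
    {μ : Cardinal.{u}} (hμ : μ.IsRegular) (hμB : μ = coinitCard B) :
    ¬ NuNuCompact X μ := by
  intro hcompact
  obtain ⟨S, hSB, hScoi, hScard⟩ := coinitCard_spec B
  have hScard' : #S = μ := hScard.trans hμB.symm
  set 𝒰 : Set (Set X) := insert A (Ioi '' S) with h𝒰
  have hopen : ∀ U ∈ 𝒰, IsOpen U := by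
    rintro U (rfl | ⟨s, hs, rfl⟩)
    · exact hAopen
    · exact go_isOpen_Ioi hB hc s
  have hcover : ⋃₀ 𝒰 = Set.univ := by
    apply eq_univ_of_forall
    intro p
    rcases (hunion.symm ▸ Set.mem_univ p : p ∈ A ∪ B) with hpA | hpB
    · exact ⟨A, Set.mem_insert _ _, hpA⟩
    · push_neg at hnomin
      obtain ⟨b, hbB, hpb⟩ := hnomin p hpB
      obtain ⟨s, hsS, hbs⟩ := hScoi b hbB
      exact ⟨Ioi s, Set.mem_insert_of_mem _ ⟨s, hsS, rfl⟩, lt_of_le_of_lt hbs hpb⟩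
  have hcard : #𝒰 ≤ μ := by
    calc #𝒰 ≤ #(Ioi '' S : Set (Set X)) + 1 := Cardinal.mk_insert_le
      _ ≤ #S + 1 := add_le_add_left Cardinal.mk_image_le 1
      _ = μ + 1 := by rw [hScard']
      _ = μ := Cardinal.add_one_eq hμ.aleph0_le
  obtain ⟨𝒱, h𝒱𝒰, h𝒱card, h𝒱cover⟩ := hcompact 𝒰 hopen hcover hcard
  set S' : Set X := {s ∈ S | Ioi s ∈ 𝒱} with hS'
  have hS'card : #S' < μ := by
    refine lt_of_le_of_lt ?_ h𝒱card
    refine Cardinal.mk_le_of_injective (f := fun s => (⟨Ioi s.1, s.2.2⟩ : 𝒱)) ?_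
    intro s₁ s₂ h
    have h' : Ioi s₁.1 = Ioi s₂.1 := congrArg Subtype.val h
    rcases lt_trichotomy s₁.1 s₂.1 with hlt | heq | hlt
    · exact absurd (h' ▸ hlt : s₂.1 ∈ Ioi s₂.1) (lt_irrefl _)
    · exact Subtype.ext heq
    · exact absurd (h'.symm ▸ hlt : s₁.1 ∈ Ioi s₁.1) (lt_irrefl _)
  have hnotcoi : ¬ ∀ b ∈ B, ∃ s ∈ S', s ≤ b := by
    intro hcoi
    exact absurd (hμB ▸ coinitCard_le (fun s hs => hSB hs.1) hcoi) (not_le.mpr hS'card)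
  push_neg at hnotcoi
  obtain ⟨b, hbB, hb⟩ := hnotcoi
  obtain ⟨V, hV𝒱, hbV⟩ := h𝒱cover.symm ▸ Set.mem_univ b
  rcases h𝒱𝒰 hV𝒱 with rfl | ⟨s, hsS, rfl⟩
  · exact lt_irrefl b (hAB b hbV b hbB)
  · exact lt_asymm hbV (hb s ⟨hsS, hV𝒱⟩)

end Easy
section Limit

variable {X : Type u} [LinearOrder X] [TopologicalSpace X] [T2Space X]
variable {𝓑 : Set (Set X)}

theorem exists_limit_anti (hB : IsTopologicalBasis 𝓑) (hc : ∀ s ∈ 𝓑, s.OrdConnected)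
    (hnogapω : ∀ A B : Set X,
      ¬((IsGap A B ∧ IsGapType ℵ₀ A B) ∨ (IsPseudoGap A B ∧ IsPseudoGapType ℵ₀ A B)))
    (t : ℕ → X) (ht : StrictAnti t) :
    ∃ b, (∀ n, b ≤ t n) ∧ ∀ U, IsOpen U → b ∈ U → ∃ n, t n ∈ U := by
  by_contra hlim
  push_neg at hlim
  set B₁ : Set X := ⋃ n, Ioi (t n) with hB₁
  set A₁ : Set X := B₁ᶜ with hA₁
  have hA₁mem : ∀ p, p ∈ A₁ ↔ ∀ n, p ≤ t n := by
    intro p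
    simp [hA₁, hB₁, not_lt]
  have htB₁ : ∀ n, t n ∈ B₁ := fun n => Set.mem_iUnion.mpr ⟨n + 1, ht (Nat.lt_succ_self n)⟩
  have hB₁open : IsOpen B₁ := isOpen_iUnion fun n => go_isOpen_Ioi hB hc (t n)
  have hA₁open : IsOpen A₁ := by
    rw [isOpen_iff_forall_mem_open]
    intro b hb
    obtain ⟨U, hUopen, hbU, hU⟩ := hlim b ((hA₁mem b).mp hb)
    obtain ⟨W, hW𝓑, hbW, hWU⟩ := hB.exists_subset_of_mem_open hbU hUopen
    refine ⟨W, fun w hw => ?_, hB.isOpen hW𝓑, hbW⟩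
    rw [hA₁mem]
    intro n
    by_contra hwn
    push_neg at hwn
    have : t n ∈ W := (hc W hW𝓑).out hbW hw ⟨(hA₁mem b).mp hb n, hwn.le⟩
    exact hU n (hWU this)
  have hunion : A₁ ∪ B₁ = Set.univ := compl_union_self B₁
  have hAB : ∀ a ∈ A₁, ∀ b ∈ B₁, a < b := by
    intro a ha b hb
    obtain ⟨_, ⟨n, rfl⟩, hbn⟩ := hb
    exact lt_of_le_of_lt ((hA₁mem a).mp ha n) hbn
  have hnomin : ¬ ∃ m ∈ B₁, ∀ b ∈ B₁, m ≤ b := by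
    rintro ⟨m, hm, hmin⟩
    obtain ⟨_, ⟨n, rfl⟩, hmn⟩ := hm
    exact absurd (hmin (t n) (htB₁ n)) (not_le.mpr hmn)
  have hcoinit : coinitCard B₁ = ℵ₀ := by
    have hle : coinitCard B₁ ≤ ℵ₀ := by
      refine le_trans (coinitCard_le (S := Set.range t) ?_ ?_) ?_
      · rintro s ⟨n, rfl⟩; exact htB₁ n
      · rintro b hb
        obtain ⟨_, ⟨n, rfl⟩, hbn⟩ := hb
        exact ⟨t n, ⟨n, rfl⟩, hbn.le⟩
      · exact Cardinal.mk_le_aleph0_iff.mpr (Set.countable_range t)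
    refine le_antisymm hle (le_coinitCard fun T hTB hTcoi => ?_)
    by_contra hT
    push_neg at hT
    have hTfin : T.Finite := Cardinal.lt_aleph0_iff_set_finite.mp hT
    have hTne : T.Nonempty := by
      obtain ⟨s, hs, -⟩ := hTcoi (t 0) (htB₁ 0)
      exact ⟨s, hs⟩
    obtain ⟨m, hmT, hmin⟩ := Set.exists_min_image T id hTfin hTne
    obtain ⟨_, ⟨n, rfl⟩, hmn⟩ := hTB hmT
    obtain ⟨s, hsT, hsn⟩ := hTcoi (t (n + 1)) (htB₁ (n + 1))
    exact absurd (le_trans (hmin s hsT) (le_trans hsn (ht (Nat.lt_succ_self n)).le)) (not_le.mpr hmn)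
  have htype : (ℵ₀ : Cardinal.{u}) = coinitCard B₁ := hcoinit.symm
  by_cases hmax : ∃ m ∈ A₁, ∀ a ∈ A₁, a ≤ m
  · -- pseudo-gap
    obtain ⟨m, hmA, -⟩ := id hmax
    exact hnogapω A₁ B₁ (Or.inr ⟨⟨hA₁open, hB₁open, hunion, hAB, ⟨m, hmA⟩, ⟨t 0, htB₁ 0⟩,
      Or.inl ⟨hmax, hnomin⟩⟩, Or.inr ⟨hmax, htype⟩⟩)
  · -- gap
    exact hnogapω A₁ B₁ (Or.inl ⟨⟨hA₁open, hB₁open, hunion, hAB, hmax, hnomin⟩, Or.inr htype⟩)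

end Limit
/-- The set of points having `ν`-many terms of `x` restricted to `M` above them. -/
def bigAbove {X ι : Type u} [LinearOrder X] (ν : Cardinal.{u}) (x : ι → X) (M : Set ι) :
    Set X :=
  {u | ¬ #{α | α ∈ M ∧ u < x α} < ν}

theorem bigAbove_down {X ι : Type u} [LinearOrder X] {ν : Cardinal.{u}} {x : ι → X}
    {M : Set ι} {u u' : X} (h : u ∈ bigAbove ν x M) (hle : u' ≤ u) : u' ∈ bigAbove ν x M :=
  fun hsm => h (lt_of_le_of_lt
    (Cardinal.mk_le_mk_of_subset fun α hα =>
      show α ∈ M ∧ u' < x α from ⟨hα.1, lt_of_le_of_lt hle hα.2⟩) hsm)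

section Key

variable {X : Type u} [LinearOrder X] [TopologicalSpace X] [T2Space X]
variable {𝓑 : Set (Set X)}

theorem key (hB : IsTopologicalBasis 𝓑) (hc : ∀ s ∈ 𝓑, s.OrdConnected)
    {ν : Cardinal.{u}} (hν : ν.IsRegular)
    (hnogap : ∀ A B : Set X,
      ¬((IsGap A B ∧ IsGapType ν A B) ∨ (IsPseudoGap A B ∧ IsPseudoGapType ν A B)))
    {ι : Type u} (hι : #ι ≤ ν) (x : ι → X)
    (hsm : ∀ p : X, ∃ W ∈ 𝓑, p ∈ W ∧ #{α | x α ∈ W} < ν)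
    (M : Set ι) (hM : ¬ #M < ν) :
    ∃ t ∈ bigAbove ν x M, ¬ #{α | α ∈ M ∧ x α ≤ t} < ν := by
  set A' := bigAbove ν x M with hA'def
  set B' := A'ᶜ with hB'def
  have hmemA : ∀ u : X, u ∈ A' ↔ ¬ #{α | α ∈ M ∧ u < x α} < ν := fun u => Iff.rfl
  have hmemB : ∀ u : X, u ∈ B' ↔ #{α | α ∈ M ∧ u < x α} < ν := by
    intro u; rw [hB'def, Set.mem_compl_iff, hmemA, not_not]
  have hdown : ∀ {u u' : X}, u ∈ A' → u' ≤ u → u' ∈ A' := fun h hle => bigAbove_down h hle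
  have horder : ∀ a ∈ A', ∀ b ∈ B', a < b := by
    intro a ha b hb
    by_contra hba
    push_neg at hba
    exact (hdown ha hba) ((hmemB b).mp hb)
  have hsmeq : ∀ b : X, #{α | α ∈ M ∧ x α = b} < ν := by
    intro b
    obtain ⟨W, hW𝓑, hbW, hWsm⟩ := hsm b
    exact lt_of_le_of_lt
      (Cardinal.mk_le_mk_of_subset fun α hα => show x α ∈ W from hα.2 ▸ hbW) hWsm
  have hgelt : ∀ b ∈ B', #{α | α ∈ M ∧ b ≤ x α} < ν := by
    intro b hb
    have hsub : {α | α ∈ M ∧ b ≤ x α} ⊆ {α | α ∈ M ∧ b < x α} ∪ {α | α ∈ M ∧ x α = b} := by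
      rintro α ⟨h1, h2⟩
      rcases lt_or_eq_of_le h2 with h | h
      · exact Or.inl ⟨h1, h⟩
      · exact Or.inr ⟨h1, h.symm⟩
    exact lt_of_le_of_lt (le_trans (Cardinal.mk_le_mk_of_subset hsub) (Cardinal.mk_union_le _ _))
      (Cardinal.add_lt_of_lt hν.aleph0_le ((hmemB b).mp hb) (hsmeq b))
  have hA'open : IsOpen A' := by
    rw [isOpen_iff_forall_mem_open]
    intro u hu
    obtain ⟨W, hW𝓑, huW, hWsm⟩ := hsm u
    refine ⟨W, fun w hw => ?_, hB.isOpen hW𝓑, huW⟩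
    rcases le_or_gt w u with hle | hlt
    · exact hdown hu hle
    · rw [hmemA]
      intro hsmall
      apply (hmemA u).mp hu
      have hsub : {α | α ∈ M ∧ u < x α} ⊆ {α | α ∈ M ∧ w < x α} ∪ {α | x α ∈ W} := by
        rintro α ⟨h1, h2⟩
        rcases le_or_gt (x α) w with h | h
        · exact Or.inr ((hc W hW𝓑).out huW hw ⟨h2.le, h⟩)
        · exact Or.inl ⟨h1, h⟩
      exact lt_of_le_of_lt
        (le_trans (Cardinal.mk_le_mk_of_subset hsub) (Cardinal.mk_union_le _ _))
        (Cardinal.add_lt_of_lt hν.aleph0_le hsmall hWsm)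
  have hB'open : IsOpen B' := by
    rw [isOpen_iff_forall_mem_open]
    intro u hu
    obtain ⟨W, hW𝓑, huW, hWsm⟩ := hsm u
    refine ⟨W, fun w hw => ?_, hB.isOpen hW𝓑, huW⟩
    rw [hmemB]
    rcases le_or_gt u w with hle | hlt
    · exact lt_of_le_of_lt
        (Cardinal.mk_le_mk_of_subset fun α hα =>
          show α ∈ M ∧ u < x α from ⟨hα.1, lt_of_le_of_lt hle hα.2⟩)
        ((hmemB u).mp hu)
    · have hsub : {α | α ∈ M ∧ w < x α} ⊆ {α | α ∈ M ∧ u < x α} ∪ {α | x α ∈ W} := by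
        rintro α ⟨h1, h2⟩
        rcases le_or_gt (x α) u with h | h
        · exact Or.inr ((hc W hW𝓑).out hw huW ⟨h2.le, h⟩)
        · exact Or.inl ⟨h1, h⟩
      exact lt_of_le_of_lt
        (le_trans (Cardinal.mk_le_mk_of_subset hsub) (Cardinal.mk_union_le _ _))
        (Cardinal.add_lt_of_lt hν.aleph0_le ((hmemB u).mp hu) hWsm)
  set MA : Set ι := {α | α ∈ M ∧ x α ∈ A'} with hMAdef
  set MB : Set ι := {α | α ∈ M ∧ x α ∈ B'} with hMBdef
  rcases em (#MB < ν) with hMBsm | hMBbig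
  · -- mass on the A' side
    have hMAbig : ¬ #MA < ν := by
      intro hMA
      apply hM
      have hsub : M ⊆ MA ∪ MB := by
        intro α hα
        rcases em (x α ∈ A') with h | h
        · exact Or.inl ⟨hα, h⟩
        · exact Or.inr ⟨hα, h⟩
      exact lt_of_le_of_lt
        (le_trans (Cardinal.mk_le_mk_of_subset hsub) (Cardinal.mk_union_le _ _))
        (Cardinal.add_lt_of_lt hν.aleph0_le hMA hMBsm)
    rcases em (∃ t ∈ A', ¬ #{α | α ∈ M ∧ x α ≤ t} < ν) with hstep | hstep
    · exact hstep
    · exfalso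
      push_neg at hstep
      have hMAne : MA.Nonempty := by
        rw [Set.nonempty_iff_ne_empty]
        rintro h
        apply hMAbig
        rw [hMAdef] at h
        rw [hMAdef, h]
        simpa using hν.pos
      obtain ⟨α₀, hα₀M, hα₀A⟩ := hMAne
      have hcofS : ∀ u ∈ A', ∃ s ∈ x '' MA, u ≤ s := by
        intro u hu
        by_contra hcon
        push_neg at hcon
        apply (hmemA u).mp hu
        refine lt_of_le_of_lt (Cardinal.mk_le_mk_of_subset ?_) hMBsm
        rintro α ⟨h1, h2⟩
        rcases em (x α ∈ A') with h | h
        · exact absurd h2 (not_lt.mpr (hcon (x α) ⟨α, ⟨h1, h⟩, rfl⟩).le)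
        · exact ⟨h1, h⟩
      have hcofup : cofinCard A' ≤ ν := by
        refine le_trans (cofinCard_le (S := x '' MA) ?_ hcofS)
          (le_trans Cardinal.mk_image_le (le_trans (Cardinal.mk_set_le MA) hι))
        rintro s ⟨α, hα, rfl⟩
        exact hα.2
      have hcoflo : ν ≤ cofinCard A' := by
        refine le_cofinCard fun T hTA hTcof => ?_
        by_contra hT
        push_neg at hT
        apply hMAbig
        have hsub : MA ⊆ ⋃ t ∈ T, {α | α ∈ M ∧ x α ≤ t} := by
          rintro α ⟨h1, h2⟩
          obtain ⟨s, hsT, hxs⟩ := hTcof (x α) h2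
          exact Set.mem_biUnion hsT ⟨h1, hxs⟩
        exact lt_of_le_of_lt (Cardinal.mk_le_mk_of_subset hsub)
          (mk_biUnion_lt hν hT fun s hs => hstep s (hTA hs))
      have hcof : cofinCard A' = ν := le_antisymm hcofup hcoflo
      have htype : ν = cofinCard A' := hcof.symm
      have hnomaxA : ¬ ∃ m ∈ A', ∀ a ∈ A', a ≤ m := by
        rintro ⟨m, hm, hmax⟩
        apply (hmemA m).mp hm
        refine lt_of_le_of_lt (Cardinal.mk_le_mk_of_subset ?_) hMBsm
        rintro α ⟨h1, h2⟩
        rcases em (x α ∈ A') with h | h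
        · exact absurd (hmax (x α) h) (not_le.mpr h2)
        · exact ⟨h1, h⟩
      rcases em (∃ m ∈ B', ∀ b ∈ B', m ≤ b) with hminB | hminB
      · obtain ⟨m, hmB, -⟩ := id hminB
        exact hnogap A' B' (Or.inr ⟨⟨hA'open, hB'open, union_compl_self A', horder,
          ⟨x α₀, hα₀A⟩, ⟨m, hmB⟩, Or.inr ⟨hnomaxA, hminB⟩⟩, Or.inl ⟨hminB, htype⟩⟩)
      · exact hnogap A' B' (Or.inl ⟨⟨hA'open, hB'open, union_compl_self A', horder,
          hnomaxA, hminB⟩, Or.inl htype⟩)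
  · -- mass on the B' side : contradiction
    exfalso
    have hMBne : MB.Nonempty := by
      rw [Set.nonempty_iff_ne_empty]
      rintro h
      rw [hMBdef] at h
      apply hMBbig
      rw [hMBdef, h]
      simpa using hν.pos
    obtain ⟨α₀, hα₀M, hα₀B⟩ := hMBne
    have hcoiup : coinitCard B' ≤ ν := by
      refine le_trans (coinitCard_le (S := x '' MB) ?_ ?_)
        (le_trans Cardinal.mk_image_le (le_trans (Cardinal.mk_set_le MB) hι))
      · rintro s ⟨α, hα, rfl⟩
        exact hα.2
      · intro b hb
        by_contra hcon
        push_neg at hcon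
        apply hMBbig
        refine lt_of_le_of_lt (Cardinal.mk_le_mk_of_subset ?_) ((hmemB b).mp hb)
        rintro α ⟨h1, h2⟩
        exact ⟨h1, hcon (x α) ⟨α, ⟨h1, h2⟩, rfl⟩⟩
    have hcoilo : ν ≤ coinitCard B' := by
      refine le_coinitCard fun T hTB hTcoi => ?_
      by_contra hT
      push_neg at hT
      apply hMBbig
      have hsub : MB ⊆ ⋃ t ∈ T, {α | α ∈ M ∧ t ≤ x α} := by
        rintro α ⟨h1, h2⟩
        obtain ⟨s, hsT, hsx⟩ := hTcoi (x α) h2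
        exact Set.mem_biUnion hsT ⟨h1, hsx⟩
      exact lt_of_le_of_lt (Cardinal.mk_le_mk_of_subset hsub)
        (mk_biUnion_lt hν hT fun s hs => hgelt s (hTB hs))
    have hcoi : coinitCard B' = ν := le_antisymm hcoiup hcoilo
    have htype : ν = coinitCard B' := hcoi.symm
    have hnominB : ¬ ∃ m ∈ B', ∀ b ∈ B', m ≤ b := by
      rintro ⟨m, hm, hmin⟩
      have h1 : coinitCard B' ≤ #({m} : Set X) :=
        coinitCard_le (by simpa using hm) (fun b hb => ⟨m, Set.mem_singleton m, hmin b hb⟩)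
      rw [Cardinal.mk_singleton, hcoi] at h1
      exact (hν.aleph0_le.trans h1).not_gt Cardinal.one_lt_aleph0
    rcases em (∃ m ∈ A', ∀ a ∈ A', a ≤ m) with hmaxA | hmaxA
    · obtain ⟨m, hmA, -⟩ := id hmaxA
      exact hnogap A' B' (Or.inr ⟨⟨hA'open, hB'open, union_compl_self A', horder, ⟨m, hmA⟩,
        ⟨x α₀, hα₀B⟩, Or.inl ⟨hmaxA, hnominB⟩⟩, Or.inr ⟨hmaxA, htype⟩⟩)
    · exact hnogap A' B' (Or.inl ⟨⟨hA'open, hB'open, union_compl_self A', horder, hmaxA,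
        hnominB⟩, Or.inr htype⟩)

end Key
section NoCap

variable {X : Type u} [LinearOrder X] [TopologicalSpace X] [T2Space X]
variable {𝓑 : Set (Set X)}

theorem no_cap (hB : IsTopologicalBasis 𝓑) (hc : ∀ s ∈ 𝓑, s.OrdConnected)
    {ν : Cardinal.{u}} (hν : ν.IsRegular)
    (hnogapν : ∀ A B : Set X,
      ¬((IsGap A B ∧ IsGapType ν A B) ∨ (IsPseudoGap A B ∧ IsPseudoGapType ν A B)))
    (hnogapω : ∀ A B : Set X,
      ¬((IsGap A B ∧ IsGapType ℵ₀ A B) ∨ (IsPseudoGap A B ∧ IsPseudoGapType ℵ₀ A B)))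
    {ι : Type u} (hι : #ι = ν) (x : ι → X)
    (hnocap : ∀ p : X, ∃ U, IsOpen U ∧ p ∈ U ∧ #{α | x α ∈ U} < ν) : False := by
  have hsm : ∀ p : X, ∃ W ∈ 𝓑, p ∈ W ∧ #{α | x α ∈ W} < ν := by
    intro p
    obtain ⟨U, hUopen, hpU, hUsm⟩ := hnocap p
    obtain ⟨W, hW𝓑, hpW, hWU⟩ := hB.exists_subset_of_mem_open hpU hUopen
    exact ⟨W, hW𝓑, hpW,
      lt_of_le_of_lt (Cardinal.mk_le_mk_of_subset fun α hα => hWU hα) hUsm⟩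
  have hstep : ∀ M : {M : Set ι // ¬ #M < ν},
      ∃ t, t ∈ bigAbove ν x M.1 ∧ ¬ #{α | α ∈ M.1 ∧ x α ≤ t} < ν := by
    intro M
    obtain ⟨t, h1, h2⟩ := key hB hc hν hnogapν hι.le x hsm M.1 M.2
    exact ⟨t, h1, h2⟩
  choose tf h1 h2 using hstep
  set next : {M : Set ι // ¬ #M < ν} → {M : Set ι // ¬ #M < ν} :=
    fun M => ⟨{α | α ∈ M.1 ∧ x α ≤ tf M}, h2 M⟩ with hnext
  have hM0 : ¬ #(Set.univ : Set ι) < ν := by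
    rw [Cardinal.mk_univ, hι]
    exact lt_irrefl ν
  set seq : ℕ → {M : Set ι // ¬ #M < ν} := fun n => next^[n] ⟨Set.univ, hM0⟩ with hseqdef
  have hseq : ∀ n, seq (n + 1) = next (seq n) := by
    intro n
    rw [hseqdef]
    exact Function.iterate_succ_apply' next n _
  set t : ℕ → X := fun n => tf (seq n) with htdef
  have hsucc : ∀ n, (seq (n + 1)).1 = {α | α ∈ (seq n).1 ∧ x α ≤ t n} := by
    intro n
    rw [hseq n]
  have hanti : StrictAnti t := by
    apply strictAnti_nat_of_succ_lt
    intro n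
    have hnotin : t n ∉ bigAbove ν x (seq (n + 1)).1 := by
      intro hmem
      apply hmem
      have hempty : {α | α ∈ (seq (n + 1)).1 ∧ t n < x α} = ∅ := by
        rw [Set.eq_empty_iff_forall_notMem]
        rintro α ⟨hα1, hα2⟩
        rw [hsucc n] at hα1
        exact absurd hα2 (not_lt.mpr hα1.2)
      rw [hempty]
      simpa using hν.pos
    by_contra hle
    push_neg at hle
    exact hnotin (bigAbove_down (h1 (seq (n + 1))) hle)
  obtain ⟨b, hb1, hb2⟩ := exists_limit_anti hB hc hnogapω t hanti
  obtain ⟨W, hW𝓑, hbW, hWsm⟩ := hsm b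
  obtain ⟨N, htN⟩ := hb2 W (hB.isOpen hW𝓑) hbW
  have hbig : ¬ #{α | α ∈ (seq (N + 1)).1 ∧ t (N + 1) < x α} < ν := h1 (seq (N + 1))
  apply hbig
  refine lt_of_le_of_lt (Cardinal.mk_le_mk_of_subset ?_) hWsm
  rintro α ⟨hα1, hα2⟩
  rw [hsucc N] at hα1
  exact (hc W hW𝓑).out hbW htN ⟨le_trans (hb1 (N + 1)) hα2.le, hα1.2⟩

end NoCap
theorem mk_Iio_toType_lt (ν : Cardinal.{u}) (α : ν.ord.ToType) : #(Set.Iio α) < ν :=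
  Cardinal.mk_Iio_ord_toType α
/-- For a set `H` of infinite regular cardinals with `ℵ₀ ∈ H`, a GO space `X` is
`[ν, ν]`-compact for every `ν ∈ H` iff `X` has no gap and no pseudo-gap whose type belongs
to `H`. -/
theorem stmt2 (H : Set Cardinal.{u}) (hH : ∀ ν ∈ H, ν.IsRegular) (hω : ℵ₀ ∈ H)
    (X : Type u) [LinearOrder X] [TopologicalSpace X] [T2Space X]
    (hGO : ∃ 𝓑 : Set (Set X), IsTopologicalBasis 𝓑 ∧ ∀ s ∈ 𝓑, s.OrdConnected) :
    (∀ ν ∈ H, NuNuCompact X ν) ↔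
      ¬ ∃ (A B : Set X) (μ : Cardinal.{u}), μ ∈ H ∧
        ((IsGap A B ∧ IsGapType μ A B) ∨ (IsPseudoGap A B ∧ IsPseudoGapType μ A B)) := by
  obtain ⟨𝓑, hB, hc⟩ := hGO
  constructor
  · rintro h ⟨A, B, μ, hμH, hcase⟩
    have hμreg := hH μ hμH
    rcases hcase with ⟨⟨hAo, hBo, hun, hlt, hnomax, hnomin⟩, htype⟩ |
      ⟨⟨hAo, hBo, hun, hlt, hAne, hBne, hd⟩, htype⟩
    · rcases htype with ht | ht
      · exact notNuNu_right hB hc hBo hun hlt hnomax hμreg ht (h μ hμH)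
      · exact notNuNu_left hB hc hAo hun hlt hnomin hμreg ht (h μ hμH)
    · rcases htype with ⟨hmin, ht⟩ | ⟨hmax, ht⟩
      · rcases hd with ⟨hmaxA, hnominB⟩ | ⟨hnomaxA, hminB⟩
        · exact hnominB hmin
        · exact notNuNu_right hB hc hBo hun hlt hnomaxA hμreg ht (h μ hμH)
      · rcases hd with ⟨hmaxA, hnominB⟩ | ⟨hnomaxA, hminB⟩
        · exact notNuNu_left hB hc hAo hun hlt hnominB hμreg ht (h μ hμH)
        · exact hnomaxA hmax
  · intro hno ν hνH
    have hν := hH ν hνH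
    intro 𝒰 hopen hcover hcard
    by_contra hncov
    push_neg at hncov
    rcases em (#𝒰 < ν) with hlt𝒰 | hge
    · exact hncov 𝒰 Set.Subset.rfl hlt𝒰 hcover
    · have h𝒰card : #𝒰 = ν := le_antisymm hcard (not_lt.mp hge)
      set ι := ν.ord.ToType with hιdef
      have hmkι : #ι = ν := Cardinal.mk_ord_toType ν
      have hmk𝒰 : #ι = #𝒰 := by rw [hmkι, h𝒰card]
      obtain ⟨e⟩ := Cardinal.eq.mp hmk𝒰
      have hIio : ∀ α : ι, #(Set.Iio α) < ν := fun α => mk_Iio_toType_lt ν α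
      have hIic : ∀ α : ι, #(Set.Iic α) < ν := by
        intro α
        rw [← Set.Iio_insert]
        exact lt_of_le_of_lt Cardinal.mk_insert_le
          (Cardinal.add_lt_of_lt hν.aleph0_le (hIio α)
            (lt_of_lt_of_le Cardinal.one_lt_aleph0 hν.aleph0_le))
      have hpick : ∀ α : ι, ∃ p : X, p ∉ ⋃₀ ((fun β => (e β : Set X)) '' Set.Iic α) := by
        intro α
        have hsub : (fun β => (e β : Set X)) '' Set.Iic α ⊆ 𝒰 := by
          rintro _ ⟨β, -, rfl⟩
          exact (e β).2
        have hcard' : #((fun β => (e β : Set X)) '' Set.Iic α) < ν :=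
          lt_of_le_of_lt Cardinal.mk_image_le (hIic α)
        exact (Set.ne_univ_iff_exists_notMem _).mp (hncov _ hsub hcard')
      choose x hx using hpick
      apply no_cap hB hc hν (fun A B hcase => hno ⟨A, B, ν, hνH, hcase⟩)
        (fun A B hcase => hno ⟨A, B, ℵ₀, hω, hcase⟩) hmkι x
      intro p
      have hp : p ∈ ⋃₀ 𝒰 := hcover.symm ▸ Set.mem_univ p
      obtain ⟨U, hU𝒰, hpU⟩ := hp
      refine ⟨U, hopen U hU𝒰, hpU, ?_⟩
      set γ := e.symm ⟨U, hU𝒰⟩ with hγdef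
      have hsub : {α | x α ∈ U} ⊆ Set.Iio γ := by
        intro α hα
        by_contra hge'
        rw [Set.mem_Iio, not_lt] at hge'
        apply hx α
        have heU : (fun β => (e β : Set X)) γ = U := by simp [hγdef]
        exact ⟨U, ⟨γ, hge', heU⟩, hα⟩
      exact lt_of_le_of_lt (Cardinal.mk_le_mk_of_subset hsub) (hIio γ)
end

section
/- Let X be a GO space, D an ultrafilter on a set I, (x_i)_{i∈I} a sequence in X, and let A = {x ∈ X : {i ∈ I : x < x_i} ∈ D} and B = {x ∈ X : {i ∈ I : x_i < x} ∈ D}. Then (x_i)_{i∈I} D-converges to a point x ∈ X if and only if one of the following (mutually exclusive) conditions holds: (a) {i ∈ I : x_i = x} ∈ D; (b) x is the maximum of A and x belongs to the closure of B; (c) x is the minimum of B and x belongs to the closure of A. -/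
universe u v

open Set Cardinal Filter Topology TopologicalSpace

/-- Characterization of `D`-convergence in GO spaces. -/
theorem stmt3 {X : Type u} [LinearOrder X] [TopologicalSpace X] [T2Space X]
    (hGO : ∃ 𝓑 : Set (Set X), IsTopologicalBasis 𝓑 ∧ ∀ s ∈ 𝓑, s.OrdConnected)
    {I : Type v} (D : Ultrafilter I) (x : I → X) (A B : Set X)
    (hA : A = {p : X | {i | p < x i} ∈ D}) (hB : B = {p : X | {i | x i < p} ∈ D})
    (p : X) :
    DConv D x p ↔
      ({i | x i = p} ∈ D ∨
        (p ∈ A ∧ (∀ a ∈ A, a ≤ p) ∧ p ∈ closure B) ∨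
        (p ∈ B ∧ (∀ b ∈ B, p ≤ b) ∧ p ∈ closure A)) := by

  obtain ⟨𝓑, hbasis, hconvx⟩ := hGO
  have hmemA : ∀ q : X, q ∈ A ↔ {i | q < x i} ∈ D := fun q => by rw [hA]; exact Iff.rfl
  have hmemB : ∀ q : X, q ∈ B ↔ {i | x i < q} ∈ D := fun q => by rw [hB]; exact Iff.rfl
  have hnon : ∀ {s t : Set I}, s ∈ D → t ∈ D → (s ∩ t).Nonempty := fun hs ht =>
    Filter.nonempty_of_mem (Filter.inter_mem hs ht)
  -- rays are open
  have hIio : ∀ a : X, IsOpen (Set.Iio a) := by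
    intro a
    rw [isOpen_iff_forall_mem_open]
    intro y hy
    obtain ⟨U1, U2, hU1, hU2, hyU1, haU2, hdisj⟩ := t2_separation (ne_of_lt hy)
    obtain ⟨V, hV𝓑, hyV, hVU1⟩ := hbasis.exists_subset_of_mem_open hyU1 hU1
    refine ⟨V, ?_, hbasis.isOpen hV𝓑, hyV⟩
    intro z hz
    rw [Set.mem_Iio]
    by_contra hza
    push_neg at hza
    have haV : a ∈ V := (hconvx V hV𝓑).out hyV hz ⟨le_of_lt hy, hza⟩
    exact Set.disjoint_left.mp hdisj (hVU1 haV) haU2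
  have hIoi : ∀ a : X, IsOpen (Set.Ioi a) := by
    intro a
    rw [isOpen_iff_forall_mem_open]
    intro y hy
    have hy' : a < y := hy
    obtain ⟨U1, U2, hU1, hU2, hyU1, haU2, hdisj⟩ := t2_separation (ne_of_gt hy')
    obtain ⟨V, hV𝓑, hyV, hVU1⟩ := hbasis.exists_subset_of_mem_open hyU1 hU1
    refine ⟨V, ?_, hbasis.isOpen hV𝓑, hyV⟩
    intro z hz
    rw [Set.mem_Ioi]
    by_contra hza
    push_neg at hza
    have haV : a ∈ V := (hconvx V hV𝓑).out hz hyV ⟨hza, le_of_lt hy'⟩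
    exact Set.disjoint_left.mp hdisj (hVU1 haV) haU2
  -- A, B ordering
  have hAB : ∀ a ∈ A, ∀ b ∈ B, a < b := by
    intro a ha b hb
    by_contra h
    push_neg at h
    rw [hmemA] at ha; rw [hmemB] at hb
    obtain ⟨i, hi1, hi2⟩ := hnon ha hb
    have hi1' : a < x i := hi1
    have hi2' : x i < b := hi2
    exact lt_irrefl (x i) (lt_trans hi2' (lt_of_le_of_lt h hi1'))
  -- trichotomy
  have htri : ∀ q : X, q ∈ A ∨ q ∈ B ∨ {i | x i = q} ∈ D := by
    intro q
    by_cases h1 : q ∈ A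
    · exact Or.inl h1
    by_cases h2 : q ∈ B
    · exact Or.inr (Or.inl h2)
    refine Or.inr (Or.inr ?_)
    rw [hmemA] at h1; rw [hmemB] at h2
    have h1' : {i | x i ≤ q} ∈ D := by
      have := (Ultrafilter.compl_mem_iff_notMem (f := D)).mpr h1
      have he : {i | q < x i}ᶜ = {i | x i ≤ q} := by ext i; simp [not_lt]
      rwa [he] at this
    have h2' : {i | q ≤ x i} ∈ D := by
      have := (Ultrafilter.compl_mem_iff_notMem (f := D)).mpr h2
      have he : {i | x i < q}ᶜ = {i | q ≤ x i} := by ext i; simp [not_lt]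
      rwa [he] at this
    exact Filter.mem_of_superset (Filter.inter_mem h1' h2')
      (fun i hi => le_antisymm hi.1 hi.2)
  constructor
  · intro hcv
    by_cases hE : {i | x i = p} ∈ D
    · exact Or.inl hE
    have hEq : ∀ q : X, {i | x i = q} ∈ D → q = p := by
      intro q hq
      by_contra hqp
      obtain ⟨U1, U2, hU1, hU2, hqU1, hpU2, hdisj⟩ := t2_separation hqp
      obtain ⟨i, hi1, hi2⟩ := hnon hq (hcv U2 hU2 hpU2)
      have hi1' : x i = q := hi1
      have hi2' : x i ∈ U2 := hi2
      rw [hi1'] at hi2'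
      exact Set.disjoint_left.mp hdisj hqU1 hi2'
    rcases htri p with hpA | hpB | hpE
    · -- p ∈ A
      have hmax : ∀ a ∈ A, a ≤ p := by
        intro a ha
        by_contra hlt
        push_neg at hlt
        have h1 := hcv (Set.Iio a) (hIio a) hlt
        rw [hmemA] at ha
        obtain ⟨i, hi1, hi2⟩ := hnon ha h1
        exact absurd hi2 (not_lt.mpr (le_of_lt hi1))
      refine Or.inr (Or.inl ⟨hpA, hmax, ?_⟩)
      rw [mem_closure_iff]
      intro o ho hpo
      obtain ⟨V, hV𝓑, hpV, hVo⟩ := hbasis.exists_subset_of_mem_open hpo ho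
      have hS : {i | p < x i} ∩ {i | x i ∈ V} ∈ D :=
        Filter.inter_mem ((hmemA p).mp hpA) (hcv V (hbasis.isOpen hV𝓑) hpV)
      obtain ⟨i, hi1, hi2⟩ := Filter.nonempty_of_mem hS
      rcases htri (x i) with hq | hq | hq
      · exact absurd (hmax _ hq) (not_le.mpr hi1)
      · exact ⟨x i, hVo hi2, hq⟩
      · exact absurd (hEq _ hq) (ne_of_gt hi1)
    · -- p ∈ B
      have hmin : ∀ b ∈ B, p ≤ b := by
        intro b hb
        by_contra hlt
        push_neg at hlt
        have h1 := hcv (Set.Ioi b) (hIoi b) hlt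
        rw [hmemB] at hb
        obtain ⟨i, hi1, hi2⟩ := hnon hb h1
        exact absurd hi2 (not_lt.mpr (le_of_lt hi1))
      refine Or.inr (Or.inr ⟨hpB, hmin, ?_⟩)
      rw [mem_closure_iff]
      intro o ho hpo
      obtain ⟨V, hV𝓑, hpV, hVo⟩ := hbasis.exists_subset_of_mem_open hpo ho
      have hS : {i | x i < p} ∩ {i | x i ∈ V} ∈ D :=
        Filter.inter_mem ((hmemB p).mp hpB) (hcv V (hbasis.isOpen hV𝓑) hpV)
      obtain ⟨i, hi1, hi2⟩ := Filter.nonempty_of_mem hS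
      rcases htri (x i) with hq | hq | hq
      · exact ⟨x i, hVo hi2, hq⟩
      · exact absurd (hmin _ hq) (not_le.mpr hi1)
      · exact absurd (hEq _ hq) (ne_of_lt hi1)
    · exact absurd hpE hE
  · rintro (hE | ⟨hpA, hmax, hcl⟩ | ⟨hpB, hmin, hcl⟩) <;> intro U hU hpU
    · refine Filter.mem_of_superset hE (fun i hi => ?_)
      have hi' : x i = p := hi
      show x i ∈ U
      rw [hi']; exact hpU
    · obtain ⟨V, hV𝓑, hpV, hVU⟩ := hbasis.exists_subset_of_mem_open hpU hU
      obtain ⟨b, hbV, hbB⟩ := (mem_closure_iff.mp hcl) V (hbasis.isOpen hV𝓑) hpV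
      have hpb : p < b := hAB p hpA b hbB
      have hS : {i | p < x i} ∩ {i | x i < b} ∈ D :=
        Filter.inter_mem ((hmemA p).mp hpA) ((hmemB b).mp hbB)
      refine Filter.mem_of_superset hS (fun i hi => ?_)
      exact hVU ((hconvx V hV𝓑).out hpV hbV ⟨le_of_lt hi.1, le_of_lt hi.2⟩)
    · obtain ⟨V, hV𝓑, hpV, hVU⟩ := hbasis.exists_subset_of_mem_open hpU hU
      obtain ⟨a, haV, haA⟩ := (mem_closure_iff.mp hcl) V (hbasis.isOpen hV𝓑) hpV
      have hap : a < p := hAB a haA p hpB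
      have hS : {i | a < x i} ∩ {i | x i < p} ∈ D :=
        Filter.inter_mem ((hmemA a).mp haA) ((hmemB p).mp hpB)
      refine Filter.mem_of_superset hS (fun i hi => ?_)
      exact hVU ((hconvx V hV𝓑).out haV hpV ⟨le_of_lt hi.1, le_of_lt hi.2⟩)
end

section
/- Let X be a linear order with the order topology (LOTS), D an ultrafilter on a set I, (x_i)_{i∈I} a sequence in X, and let A = {x ∈ X : {i ∈ I : x < x_i} ∈ D} and B = {x ∈ X : {i ∈ I : x_i < x} ∈ D}. Then (x_i)_{i∈I} D-converges to a point x ∈ X if and only if either (a) {i ∈ I : x_i = x} ∈ D, or (b) x is the maximum of A and A ∪ B = X, or (c) x is the minimum of B and A ∪ B = X. -/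
universe u v

open Set Cardinal Filter Topology TopologicalSpace

/-- Characterization of `D`-convergence in LOTS. -/
theorem stmt4 {X : Type u} [LinearOrder X] [TopologicalSpace X] [OrderTopology X]
    {I : Type v} (D : Ultrafilter I) (x : I → X) (A B : Set X)
    (hA : A = {p : X | {i | p < x i} ∈ D}) (hB : B = {p : X | {i | x i < p} ∈ D})
    (p : X) :
    DConv D x p ↔
      ({i | x i = p} ∈ D ∨
        (p ∈ A ∧ (∀ a ∈ A, a ≤ p) ∧ A ∪ B = Set.univ) ∨
        (p ∈ B ∧ (∀ b ∈ B, p ≤ b) ∧ A ∪ B = Set.univ)) := by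
  have hDC : DConv D x p ↔ Filter.Tendsto x (D : Filter I) (nhds p) := by
    constructor
    · intro h U hU
      rcases mem_nhds_iff.mp hU with ⟨V, hVU, hVopen, hpV⟩
      exact Filter.mem_of_superset (h V hVopen hpV) fun i hi => hVU hi
    · intro h U hUopen hpU
      exact h (hUopen.mem_nhds hpU)
  have hne : ∀ q : X, {i | q < x i} ∈ D → {i | x i < q} ∈ D → False := by
    intro q h1 h2
    obtain ⟨i, hi1, hi2⟩ := Ultrafilter.nonempty_of_mem (Filter.inter_mem h1 h2)
    exact lt_asymm hi1 hi2
  have hne2 : ∀ q : X, {i | x i = q} ∈ D → {i | q < x i} ∈ D → False := by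
    intro q h1 h2
    obtain ⟨i, hi1, hi2⟩ := Ultrafilter.nonempty_of_mem (Filter.inter_mem h1 h2)
    exact absurd hi1 (ne_of_gt hi2)
  have hne3 : ∀ q : X, {i | x i = q} ∈ D → {i | x i < q} ∈ D → False := by
    intro q h1 h2
    obtain ⟨i, hi1, hi2⟩ := Ultrafilter.nonempty_of_mem (Filter.inter_mem h1 h2)
    exact absurd hi1 (ne_of_lt hi2)
  have tri : ∀ q : X, {i | x i = q} ∈ D ∨ {i | q < x i} ∈ D ∨ {i | x i < q} ∈ D := by
    intro q
    by_contra h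
    push_neg at h
    obtain ⟨h1, h2, h3⟩ := h
    rw [← Ultrafilter.compl_mem_iff_notMem] at h1 h2 h3
    obtain ⟨i, hi1, hi2, hi3⟩ :=
      Ultrafilter.nonempty_of_mem (Filter.inter_mem h1 (Filter.inter_mem h2 h3))
    rcases lt_trichotomy (x i) q with h | h | h
    exacts [hi3 h, hi1 h, hi2 h]
  have hAmono : ∀ q q' : X, q' ≤ q → q ∈ A → q' ∈ A := by
    intro q q' hle hq
    rw [hA] at hq ⊢
    exact Filter.mem_of_superset hq fun i hi => lt_of_le_of_lt hle hi
  have hBmono : ∀ q q' : X, q ≤ q' → q ∈ B → q' ∈ B := by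
    intro q q' hle hq
    rw [hB] at hq ⊢
    exact Filter.mem_of_superset hq fun i hi => lt_of_lt_of_le hi hle
  rw [hDC, tendsto_order]
  constructor
  · rintro ⟨h1, h2⟩
    have h1' : ∀ a < p, a ∈ A := by
      intro a ha; rw [hA]; exact (h1 a ha)
    have h2' : ∀ b, p < b → b ∈ B := by
      intro b hb; rw [hB]; exact (h2 b hb)
    rcases tri p with h | h | h
    · exact Or.inl h
    · refine Or.inr (Or.inl ⟨by rw [hA]; exact h, ?_, ?_⟩)
      · intro a haA
        by_contra hpa
        push_neg at hpa
        have : a ∈ B := h2' a hpa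
        rw [hA] at haA; rw [hB] at this
        exact hne a haA this
      · apply Set.eq_univ_of_forall
        intro q
        rcases lt_trichotomy q p with hq | hq | hq
        · exact Or.inl (h1' q hq)
        · subst hq; exact Or.inl (by rw [hA]; exact h)
        · exact Or.inr (h2' q hq)
    · refine Or.inr (Or.inr ⟨by rw [hB]; exact h, ?_, ?_⟩)
      · intro b hbB
        by_contra hpb
        push_neg at hpb
        have : b ∈ A := h1' b hpb
        rw [hA] at this; rw [hB] at hbB
        exact hne b this hbB
      · apply Set.eq_univ_of_forall
        intro q
        rcases lt_trichotomy q p with hq | hq | hq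
        · exact Or.inl (h1' q hq)
        · subst hq; exact Or.inr (by rw [hB]; exact h)
        · exact Or.inr (h2' q hq)
  · rintro (h | ⟨hpA, hmax, huniv⟩ | ⟨hpB, hmin, huniv⟩)
    · constructor
      · intro a ha
        exact Filter.mem_of_superset h fun i hi => by
          exact lt_of_lt_of_eq ha hi.symm
      · intro b hb
        exact Filter.mem_of_superset h fun i hi => by
          exact lt_of_eq_of_lt hi hb
    · constructor
      · intro a ha
        have : a ∈ A := hAmono p a ha.le hpA
        rw [hA] at this; exact this
      · intro b hb
        have hbAB : b ∈ A ∪ B := huniv ▸ Set.mem_univ b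
        rcases hbAB with hbA | hbB
        · exact absurd (hmax b hbA) (not_le.mpr hb)
        · rw [hB] at hbB; exact hbB
    · constructor
      · intro a ha
        have haAB : a ∈ A ∪ B := huniv ▸ Set.mem_univ a
        rcases haAB with haA | haB
        · rw [hA] at haA; exact haA
        · exact absurd (hmin a haB) (not_le.mpr ha)
      · intro b hb
        have : b ∈ B := hBmono p b hb.le hpB
        rw [hB] at this; exact this
end

section
/- Let X be a GO space, D an ultrafilter on a set I, (x_i)_{i∈I} a sequence in X, and let A = {x ∈ X : {i ∈ I : x < x_i} ∈ D} and B = {x ∈ X : {i ∈ I : x_i < x} ∈ D}. Then (x_i)_{i∈I} D-converges to some point x ∈ X if and only if the pair (A,B) is neither a gap nor a pseudo-gap of X. -/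
universe u v

open Set Cardinal Filter Topology TopologicalSpace

/-- In a GO space, the sequence `x` `D`-converges to some point iff the pair `(A, B)` is
neither a gap nor a pseudo-gap. -/
theorem stmt5 {X : Type u} [LinearOrder X] [TopologicalSpace X] [T2Space X]
    (hGO : ∃ 𝓑 : Set (Set X), IsTopologicalBasis 𝓑 ∧ ∀ s ∈ 𝓑, s.OrdConnected)
    {I : Type v} (D : Ultrafilter I) (x : I → X) (A B : Set X)
    (hA : A = {p : X | {i | p < x i} ∈ D}) (hB : B = {p : X | {i | x i < p} ∈ D}) :
    (∃ p : X, DConv D x p) ↔ ¬ (IsGap A B ∨ IsPseudoGap A B) := by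
  obtain ⟨𝓑, hbasis, hconv⟩ := hGO
  have hmemA : ∀ p : X, p ∈ A ↔ {i | p < x i} ∈ D := by
    intro p; rw [hA]; exact Iff.rfl
  have hmemB : ∀ p : X, p ∈ B ↔ {i | x i < p} ∈ D := by
    intro p; rw [hB]; exact Iff.rfl
  have hdisj : ∀ p q : X, q ≤ p → {i | p < x i} ∈ D → {i | x i < q} ∈ D → False := by
    intro p q hqp h1 h2
    obtain ⟨i, hi1, hi2⟩ := Filter.nonempty_of_mem (Filter.inter_mem h1 h2)
    exact absurd (hi1.trans hi2) hqp.not_gt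
  have horder : ∀ a ∈ A, ∀ b ∈ B, a < b := by
    intro a ha b hb
    by_contra h
    exact hdisj a b (not_lt.mp h) ((hmemA a).mp ha) ((hmemB b).mp hb)
  have hDConvBasis : ∀ p : X, (∀ W ∈ 𝓑, p ∈ W → {i | x i ∈ W} ∈ D) → DConv D x p := by
    intro p h U hU hpU
    obtain ⟨W, hW, hpW, hWU⟩ := hbasis.exists_subset_of_mem_open hpU hU
    exact Filter.mem_of_superset (h W hW hpW) (fun i hi => hWU hi)
  have hT2 : ∀ p q : X, q ≠ p → (∀ W ∈ 𝓑, p ∈ W → q ∈ W) → False := by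
    intro p q hne h
    obtain ⟨U, V, hU, hV, hpU, hqV, hUV⟩ := t2_separation hne.symm
    obtain ⟨W, hW, hpW, hWU⟩ := hbasis.exists_subset_of_mem_open hpU hU
    exact Set.disjoint_left.mp hUV (hWU (h W hW hpW)) hqV
  by_cases hC : ∃ c : X, {i | x i = c} ∈ D
  · obtain ⟨c, hc⟩ := hC
    have hconvc : DConv D x c := by
      intro U hU hcU
      refine Filter.mem_of_superset hc (fun i hi => ?_)
      simp only [Set.mem_setOf_eq] at hi ⊢
      rw [hi]; exact hcU
    have hcnotAB : c ∉ A ∪ B := by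
      rintro (h | h)
      · obtain ⟨i, hi1, hi2⟩ := Filter.nonempty_of_mem (Filter.inter_mem ((hmemA c).mp h) hc)
        exact absurd hi2 (ne_of_gt hi1)
      · obtain ⟨i, hi1, hi2⟩ := Filter.nonempty_of_mem (Filter.inter_mem ((hmemB c).mp h) hc)
        exact absurd hi2 (ne_of_lt hi1)
    refine iff_of_true ⟨c, hconvc⟩ ?_
    rintro (⟨_, _, hun, _⟩ | ⟨_, _, hun, _⟩) <;>
      exact hcnotAB (hun ▸ Set.mem_univ c)
  · push_neg at hC
    have htri : ∀ p : X, p ∈ A ∨ p ∈ B := by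
      intro p
      by_contra h
      push_neg at h
      obtain ⟨h1, h2⟩ := h
      have c1 : {i | p < x i}ᶜ ∈ D :=
        Ultrafilter.compl_mem_iff_notMem.mpr (fun hh => h1 ((hmemA p).mpr hh))
      have c2 : {i | x i < p}ᶜ ∈ D :=
        Ultrafilter.compl_mem_iff_notMem.mpr (fun hh => h2 ((hmemB p).mpr hh))
      refine hC p (Filter.mem_of_superset (Filter.inter_mem c1 c2) ?_)
      rintro i ⟨hi1, hi2⟩
      exact le_antisymm (not_lt.mp hi1) (not_lt.mp hi2)
    have hun : A ∪ B = Set.univ := Set.eq_univ_of_forall htri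
    constructor
    · rintro ⟨p, hp⟩ hgp
      have hopen : IsOpen A ∧ IsOpen B := by
        rcases hgp with ⟨h1, h2, _⟩ | ⟨h1, h2, _⟩ <;> exact ⟨h1, h2⟩
      rcases htri p with hpA | hpB
      · have hxA : {i | x i ∈ A} ∈ D := hp A hopen.1 hpA
        obtain ⟨j, hj1, hj2⟩ :=
          Filter.nonempty_of_mem (Filter.inter_mem hxA ((hmemA p).mp hpA))
        refine hT2 p (x j) (ne_of_gt hj2) ?_
        intro W hW hpW
        have hxW : {i | x i ∈ W} ∈ D := hp W (hbasis.isOpen hW) hpW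
        obtain ⟨k, hk1, hk2⟩ :=
          Filter.nonempty_of_mem (Filter.inter_mem hxW ((hmemA (x j)).mp hj1))
        exact (hconv W hW).out hpW hk1 ⟨le_of_lt hj2, le_of_lt hk2⟩
      · have hxB : {i | x i ∈ B} ∈ D := hp B hopen.2 hpB
        obtain ⟨j, hj1, hj2⟩ :=
          Filter.nonempty_of_mem (Filter.inter_mem hxB ((hmemB p).mp hpB))
        refine hT2 p (x j) (ne_of_lt hj2) ?_
        intro W hW hpW
        have hxW : {i | x i ∈ W} ∈ D := hp W (hbasis.isOpen hW) hpW
        obtain ⟨k, hk1, hk2⟩ :=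
          Filter.nonempty_of_mem (Filter.inter_mem hxW ((hmemB (x j)).mp hj1))
        exact (hconv W hW).out hk1 hpW ⟨le_of_lt hk2, le_of_lt hj2⟩
    · intro hn
      have hnotboth : ¬ (IsOpen A ∧ IsOpen B) := by
        rintro ⟨hAo, hBo⟩
        by_cases hAmax : ∃ m ∈ A, ∀ a ∈ A, a ≤ m
        · by_cases hBmin : ∃ m ∈ B, ∀ b ∈ B, m ≤ b
          · obtain ⟨a0, ha0, ha0max⟩ := hAmax
            obtain ⟨b0, hb0, hb0min⟩ := hBmin
            obtain ⟨i, hi1, hi2⟩ := Filter.nonempty_of_mem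
              (Filter.inter_mem ((hmemA a0).mp ha0) ((hmemB b0).mp hb0))
            rcases htri (x i) with h | h
            · exact absurd (ha0max _ h) (not_le.mpr hi1)
            · exact absurd (hb0min _ h) (not_le.mpr hi2)
          · obtain ⟨a0, ha0, ha0max⟩ := hAmax
            rcases Set.eq_empty_or_nonempty B with hBe | hBne
            · obtain ⟨i, hi⟩ := Filter.nonempty_of_mem ((hmemA a0).mp ha0)
              rcases htri (x i) with h | h
              · exact absurd (ha0max _ h) (not_le.mpr hi)
              · exact absurd h (hBe ▸ Set.notMem_empty (x i))
            · exact hn (Or.inr ⟨hAo, hBo, hun, horder, ⟨a0, ha0⟩, hBne,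
                Or.inl ⟨⟨a0, ha0, ha0max⟩, hBmin⟩⟩)
        · by_cases hBmin : ∃ m ∈ B, ∀ b ∈ B, m ≤ b
          · obtain ⟨b0, hb0, hb0min⟩ := hBmin
            rcases Set.eq_empty_or_nonempty A with hAe | hAne
            · obtain ⟨i, hi⟩ := Filter.nonempty_of_mem ((hmemB b0).mp hb0)
              rcases htri (x i) with h | h
              · exact absurd h (hAe ▸ Set.notMem_empty (x i))
              · exact absurd (hb0min _ h) (not_le.mpr hi)
            · exact hn (Or.inr ⟨hAo, hBo, hun, horder, hAne, ⟨b0, hb0⟩,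
                Or.inr ⟨hAmax, b0, hb0, hb0min⟩⟩)
          · exact hn (Or.inl ⟨hAo, hBo, hun, horder, hAmax, hBmin⟩)
      rcases not_and_or.mp hnotboth with hAno | hBno
      · have hex : ∃ p ∈ A, A ∉ nhds p := by
          by_contra h; push_neg at h
          exact hAno (isOpen_iff_mem_nhds.mpr h)
        obtain ⟨p, hpA, hpn⟩ := hex
        refine ⟨p, hDConvBasis p ?_⟩
        intro W hW hpW
        have hWnA : ¬ W ⊆ A := fun h =>
          hpn (Filter.mem_of_superset ((hbasis.isOpen hW).mem_nhds hpW) h)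
        obtain ⟨b, hbW, hbA⟩ := Set.not_subset.mp hWnA
        have hbB : b ∈ B := (htri b).resolve_left hbA
        refine Filter.mem_of_superset
          (Filter.inter_mem ((hmemA p).mp hpA) ((hmemB b).mp hbB)) ?_
        rintro i ⟨hi1, hi2⟩
        exact (hconv W hW).out hpW hbW ⟨le_of_lt hi1, le_of_lt hi2⟩
      · have hex : ∃ p ∈ B, B ∉ nhds p := by
          by_contra h; push_neg at h
          exact hBno (isOpen_iff_mem_nhds.mpr h)
        obtain ⟨p, hpB, hpn⟩ := hex
        refine ⟨p, hDConvBasis p ?_⟩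
        intro W hW hpW
        have hWnB : ¬ W ⊆ B := fun h =>
          hpn (Filter.mem_of_superset ((hbasis.isOpen hW).mem_nhds hpW) h)
        obtain ⟨a, haW, haB⟩ := Set.not_subset.mp hWnB
        have haA : a ∈ A := (htri a).resolve_right haB
        refine Filter.mem_of_superset
          (Filter.inter_mem ((hmemA a).mp haA) ((hmemB p).mp hpB)) ?_
        rintro i ⟨hi1, hi2⟩
        exact (hconv W hW).out haW hpW ⟨le_of_lt hi1, le_of_lt hi2⟩
end

section
/- Let X be a GO space, D an ultrafilter on a set I, (x_i)_{i∈I} a sequence in X, and let A = {x ∈ X : {i ∈ I : x < x_i} ∈ D} and B = {x ∈ X : {i ∈ I : x_i < x} ∈ D}. Suppose X = A ∪ B. For i ∈ I define O_i = ⋃_{a ∈ A} (x_i, a) if x_i ∈ A, and O_i = ⋃_{b ∈ B} (b, x_i) if x_i ∈ B (intervals computed in X). Then (x_i)_{i∈I} D-converges to x ∈ X if and only if x is a D-limit point of the sequence of sets (O_i)_{i∈I}. -/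
universe u v

open Set Cardinal Filter Topology TopologicalSpace

/-- In a GO space with `X = A ∪ B`, the sequence `x` `D`-converges to `p` iff `p` is a
`D`-limit point of the sequence of open sets `O`. -/
theorem stmt6 {X : Type u} [LinearOrder X] [TopologicalSpace X] [T2Space X]
    (hGO : ∃ 𝓑 : Set (Set X), IsTopologicalBasis 𝓑 ∧ ∀ s ∈ 𝓑, s.OrdConnected)
    {I : Type v} (D : Ultrafilter I) (x : I → X) (A B : Set X)
    (hA : A = {p : X | {i | p < x i} ∈ D}) (hB : B = {p : X | {i | x i < p} ∈ D})
    (hAB : A ∪ B = Set.univ) (O : I → Set X)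
    (hOA : ∀ i, x i ∈ A → O i = ⋃ a ∈ A, Ioo (x i) a)
    (hOB : ∀ i, x i ∈ B → O i = ⋃ b ∈ B, Ioo b (x i))
    (p : X) :
    DConv D x p ↔ DLimitPt D O p := by
  obtain ⟨𝓑, hbasis, hconv⟩ := hGO
  have hlt : ∀ a ∈ A, ∀ b ∈ B, a < b := by
    intro a ha b hb
    rw [hA] at ha; rw [hB] at hb
    obtain ⟨i, h1, h2⟩ := D.toFilter.nonempty_of_mem (Filter.inter_mem ha hb)
    exact h1.trans h2
  constructor
  · intro hc U hU
    obtain ⟨V, hVU, hVopen, hpV⟩ := mem_nhds_iff.mp hU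
    have hS : {i | x i ∈ V} ∈ D := hc V hVopen hpV
    have hsplit : {i | x i ∈ V ∧ x i ∈ A} ∈ D ∨ {i | x i ∈ V ∧ x i ∈ B} ∈ D := by
      rw [← Ultrafilter.union_mem_iff]
      refine Filter.mem_of_superset hS ?_
      intro i hi
      have hx : x i ∈ A ∪ B := hAB ▸ Set.mem_univ _
      rcases hx with h | h
      · exact Or.inl ⟨hi, h⟩
      · exact Or.inr ⟨hi, h⟩
    rcases hsplit with hSA | hSB
    · refine Filter.mem_of_superset hSA ?_
      rintro i ⟨hiV, hiA⟩
      have hTi : {j | x i < x j} ∈ D := by rw [hA] at hiA; exact hiA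
      obtain ⟨j, ⟨hjV, hjA⟩, hij⟩ :=
        D.toFilter.nonempty_of_mem (Filter.inter_mem hSA hTi)
      have hTj : {k | x j < x k} ∈ D := by rw [hA] at hjA; exact hjA
      obtain ⟨k, ⟨hkV, hkA⟩, hjk⟩ :=
        D.toFilter.nonempty_of_mem (Filter.inter_mem hSA hTj)
      refine ⟨x j, hVU hjV, ?_⟩
      rw [hOA i hiA]
      exact Set.mem_biUnion hkA ⟨hij, hjk⟩
    · refine Filter.mem_of_superset hSB ?_
      rintro i ⟨hiV, hiB⟩
      have hTi : {j | x j < x i} ∈ D := by rw [hB] at hiB; exact hiB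
      obtain ⟨j, ⟨hjV, hjB⟩, hij⟩ :=
        D.toFilter.nonempty_of_mem (Filter.inter_mem hSB hTi)
      have hTj : {k | x k < x j} ∈ D := by rw [hB] at hjB; exact hjB
      obtain ⟨k, ⟨hkV, hkB⟩, hjk⟩ :=
        D.toFilter.nonempty_of_mem (Filter.inter_mem hSB hTj)
      refine ⟨x j, hVU hjV, ?_⟩
      rw [hOB i hiB]
      exact Set.mem_biUnion hkB ⟨hjk, hij⟩
  · intro h U hUopen hpU
    obtain ⟨W, hWB, hpW, hWU⟩ := hbasis.exists_subset_of_mem_open hpU hUopen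
    have hWopen : IsOpen W := hbasis.isOpen hWB
    have hWconv : W.OrdConnected := hconv W hWB
    have hpAB : p ∈ A ∪ B := hAB ▸ Set.mem_univ p
    rcases hpAB with hpA | hpB
    · by_cases hq : ∃ q ∈ W, q ∈ B
      · obtain ⟨q, hqW, hqB⟩ := hq
        have h1 : {i | p < x i} ∈ D := by rw [hA] at hpA; exact hpA
        have h2 : {i | x i < q} ∈ D := by rw [hB] at hqB; exact hqB
        refine Filter.mem_of_superset (Filter.inter_mem h1 h2) ?_
        rintro i ⟨hi1, hi2⟩
        exact hWU (hWconv.out hpW hqW ⟨hi1.le, hi2.le⟩)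
      · have hWA : W ⊆ A := by
          intro w hw
          have hwAB : w ∈ A ∪ B := hAB ▸ Set.mem_univ w
          rcases hwAB with hh | hh
          · exact hh
          · exact absurd ⟨w, hw, hh⟩ hq
        have hL := h W (hWopen.mem_nhds hpW)
        have h1 : {i | p < x i} ∈ D := by rw [hA] at hpA; exact hpA
        refine Filter.mem_of_superset (Filter.inter_mem hL h1) ?_
        rintro i ⟨⟨w, hwW, hwO⟩, hpi⟩
        have hxi : x i ∈ A ∪ B := hAB ▸ Set.mem_univ (x i)
        rcases hxi with hxiA | hxiB
        · rw [hOA i hxiA] at hwO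
          simp only [Set.mem_iUnion] at hwO
          obtain ⟨a, haA, hw1, hw2⟩ := hwO
          exact hWU (hWconv.out hpW hwW ⟨hpi.le, hw1.le⟩)
        · rw [hOB i hxiB] at hwO
          simp only [Set.mem_iUnion] at hwO
          obtain ⟨b, hbB, hb1, hb2⟩ := hwO
          exact absurd (hlt w (hWA hwW) b hbB) (not_lt.mpr hb1.le)
    · by_cases hq : ∃ q ∈ W, q ∈ A
      · obtain ⟨q, hqW, hqA⟩ := hq
        have h1 : {i | x i < p} ∈ D := by rw [hB] at hpB; exact hpB
        have h2 : {i | q < x i} ∈ D := by rw [hA] at hqA; exact hqA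
        refine Filter.mem_of_superset (Filter.inter_mem h1 h2) ?_
        rintro i ⟨hi1, hi2⟩
        exact hWU (hWconv.out hqW hpW ⟨hi2.le, hi1.le⟩)
      · have hWBs : W ⊆ B := by
          intro w hw
          have hwAB : w ∈ A ∪ B := hAB ▸ Set.mem_univ w
          rcases hwAB with hh | hh
          · exact absurd ⟨w, hw, hh⟩ hq
          · exact hh
        have hL := h W (hWopen.mem_nhds hpW)
        have h1 : {i | x i < p} ∈ D := by rw [hB] at hpB; exact hpB
        refine Filter.mem_of_superset (Filter.inter_mem hL h1) ?_
        rintro i ⟨⟨w, hwW, hwO⟩, hpi⟩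
        have hxi : x i ∈ A ∪ B := hAB ▸ Set.mem_univ (x i)
        rcases hxi with hxiA | hxiB
        · rw [hOA i hxiA] at hwO
          simp only [Set.mem_iUnion] at hwO
          obtain ⟨a, haA, hw1, hw2⟩ := hwO
          exact absurd (hlt a haA w (hWBs hwW)) (not_lt.mpr hw2.le)
        · rw [hOB i hxiB] at hwO
          simp only [Set.mem_iUnion] at hwO
          obtain ⟨b, hbB, hb1, hb2⟩ := hwO
          exact hWU (hWconv.out hwW hpW ⟨hb2.le, hpi.le⟩)
end

section
/- Let D be an ultrafilter on a set I and let X be a GO space. Then X is D-compact if and only if X is D-pseudocompact. -/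
universe u v

open Set Cardinal Filter Topology TopologicalSpace

/-- For every ultrafilter `D`, a GO space is `D`-compact iff it is `D`-pseudocompact. -/
theorem stmt7 {I : Type v} (D : Ultrafilter I)
    (X : Type u) [LinearOrder X] [TopologicalSpace X] [T2Space X]
    (hGO : ∃ 𝓑 : Set (Set X), IsTopologicalBasis 𝓑 ∧ ∀ s ∈ 𝓑, s.OrdConnected) :
    DCompact D X ↔ DPseudocompact D X := by
  classical
  obtain ⟨𝓑, hB, hconv⟩ := hGO
  constructor
  · intro hc O hopen hne
    choose y hy using hne
    obtain ⟨p, hp⟩ := hc y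
    refine ⟨p, fun U hU => ?_⟩
    obtain ⟨V, hVU, hVo, hpV⟩ := mem_nhds_iff.mp hU
    exact Filter.mem_of_superset (hp V hVo hpV) fun i hi => ⟨y i, hVU hi, hy i⟩
  · intro hps x
    by_contra hno
    push_neg at hno
    have hno' : ∀ p : X, ∃ U, IsOpen U ∧ p ∈ U ∧ {i | x i ∈ U} ∉ D := by
      intro p
      have h := hno p
      unfold DConv at h
      push_neg at h
      exact h
    -- separation lemmas from T2 + convex basis
    have sepLt : ∀ a b : X, a < b → ∃ U, IsOpen U ∧ a ∈ U ∧ ∀ z ∈ U, z < b := by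
      intro a b hab
      obtain ⟨U', V, hU', hV, haU, hbV, hdisj⟩ := t2_separation hab.ne
      obtain ⟨W, hWB, haW, hWU⟩ := hB.exists_subset_of_mem_open haU hU'
      refine ⟨W, hB.isOpen hWB, haW, fun z hz => ?_⟩
      by_contra h
      push_neg at h
      have hbW : b ∈ W := (hconv W hWB).out haW hz ⟨hab.le, h⟩
      exact Set.disjoint_left.mp hdisj (hWU hbW) hbV
    have sepGt : ∀ a b : X, a < b → ∃ U, IsOpen U ∧ b ∈ U ∧ ∀ z ∈ U, a < z := by
      intro a b hab
      obtain ⟨V, U', hV, hU', hbV, haU, hdisj⟩ := t2_separation hab.ne'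
      obtain ⟨W, hWB, hbW, hWV⟩ := hB.exists_subset_of_mem_open hbV hV
      refine ⟨W, hB.isOpen hWB, hbW, fun z hz => ?_⟩
      by_contra h
      push_neg at h
      have haW : a ∈ W := (hconv W hWB).out hz hbW ⟨h, hab.le⟩
      exact Set.disjoint_left.mp hdisj (hWV haW) haU
    have hIio : ∀ c : X, IsOpen (Iio c) := by
      intro c
      rw [isOpen_iff_forall_mem_open]
      intro z hz
      obtain ⟨U, hUo, hzU, hUlt⟩ := sepLt z c hz
      exact ⟨U, fun w hw => hUlt w hw, hUo, hzU⟩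
    have hIoi : ∀ c : X, IsOpen (Ioi c) := by
      intro c
      rw [isOpen_iff_forall_mem_open]
      intro z hz
      obtain ⟨U, hUo, hzU, hUgt⟩ := sepGt c z hz
      exact ⟨U, fun w hw => hUgt w hw, hUo, hzU⟩
    -- the cut
    set L : Set X := {a : X | {i | a ≤ x i} ∈ D} with hLdef
    have hLmem : ∀ a : X, a ∈ L ↔ {i | a ≤ x i} ∈ D := fun a => Iff.rfl
    have hRmem : ∀ b : X, b ∉ L → {i | x i < b} ∈ D := by
      intro b hb
      have h : {i | b ≤ x i}ᶜ ∈ D := Ultrafilter.compl_mem_iff_notMem.mpr hb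
      have he : {i | b ≤ x i}ᶜ = {i | x i < b} := by
        ext i; simp [not_le]
      rwa [he] at h
    have hdown : ∀ a ∈ L, ∀ a' : X, a' ≤ a → a' ∈ L := by
      intro a ha a' h
      exact Filter.mem_of_superset ha fun i hi => le_trans h hi
    have hLR : ∀ a ∈ L, ∀ b : X, b ∉ L → a < b := by
      intro a ha b hb
      obtain ⟨i, hi1, hi2⟩ := Filter.nonempty_of_mem (Filter.inter_mem ha (hRmem b hb))
      exact lt_of_le_of_lt hi1 hi2
    -- no-D-limit helper
    have noLim : ∀ (O : I → Set X) (p : X) (U : Set X), IsOpen U → p ∈ U →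
        {i | U ∩ O i = ∅} ∈ D → ¬ DLimitPt D O p := by
      intro O p U hUo hpU hD hlim
      have h1 := hlim U (hUo.mem_nhds hpU)
      obtain ⟨i, hi1, hi2⟩ := Filter.nonempty_of_mem (Filter.inter_mem h1 hD)
      rw [Set.mem_setOf_eq] at hi1 hi2
      rw [hi2] at hi1
      exact Set.not_nonempty_empty hi1
    by_cases hLmax : ∃ m ∈ L, ∀ a ∈ L, a ≤ m
    · obtain ⟨p, hpL, hpmax⟩ := hLmax
      obtain ⟨U, hUo, hpU, hUD⟩ := hno' p
      obtain ⟨W, hWB, hpW, hWU⟩ := hB.exists_subset_of_mem_open hpU hUo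
      have hWD : {i | x i ∈ W} ∉ D := fun h =>
        hUD (Filter.mem_of_superset h fun i hi => hWU hi)
      have hxp : {i | x i = p} ∉ D := fun h =>
        hWD (Filter.mem_of_superset h fun i hi => by
          rw [Set.mem_setOf_eq] at hi ⊢; rw [hi]; exact hpW)
      have hLIic : ∀ a : X, a ∈ L ↔ a ≤ p := by
        intro a
        constructor
        · exact fun ha => hpmax a ha
        · exact fun ha => hdown p hpL a ha
      by_cases hRmin : ∃ m, m ∉ L ∧ ∀ b, b ∉ L → m ≤ b
      · obtain ⟨q, hqR, hqmin⟩ := hRmin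
        refine hxp (Filter.mem_of_superset
          (Filter.inter_mem ((hLmem p).mp hpL) (hRmem q hqR)) ?_)
        rintro i ⟨h1, h2⟩
        rw [Set.mem_setOf_eq] at h1 h2 ⊢
        by_cases hxL : x i ∈ L
        · exact le_antisymm (hpmax _ hxL) h1
        · exact absurd (hqmin _ hxL) (not_le.mpr h2)
      · push_neg at hRmin
        -- hRmin : ∀ m, m ∉ L → ∃ b, b ∉ L ∧ b < m (after not_le)
        have hRmin' : ∀ m, m ∉ L → ∃ b, b ∉ L ∧ b < m := by
          intro m hm
          obtain ⟨b, hb1, hb2⟩ := hRmin m hm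
          exact ⟨b, hb1, hb2⟩
        have hA : {i | p < x i} ∈ D := by
          have h2 : {i | x i = p}ᶜ ∈ D := Ultrafilter.compl_mem_iff_notMem.mpr hxp
          refine Filter.mem_of_superset (Filter.inter_mem ((hLmem p).mp hpL) h2) ?_
          rintro i ⟨h1, h2⟩
          exact lt_of_le_of_ne h1 (fun e => h2 e.symm)
        have hWp : ∀ y ∈ W, y ≤ p := by
          intro y hy
          by_contra h
          push_neg at h
          have hyR : y ∉ L := fun hyL => absurd ((hLIic y).mp hyL) (not_le.mpr h)
          refine hWD (Filter.mem_of_superset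
            (Filter.inter_mem ((hLmem p).mp hpL) (hRmem y hyR)) ?_)
          rintro i ⟨h1, h2⟩
          exact (hconv W hWB).out hpW hy ⟨h1, h2.le⟩
        set O : I → Set X := fun i => if p < x i then Ioo p (x i) else W with hOdef
        have hOopen : ∀ i, IsOpen (O i) := by
          intro i
          rw [hOdef]
          dsimp only
          split
          · rw [← Set.Ioi_inter_Iio]
            exact (hIoi p).inter (hIio _)
          · exact hB.isOpen hWB
        have hOne : ∀ i, (O i).Nonempty := by
          intro i
          rw [hOdef]
          dsimp only
          split
          · rename_i h
            have hxiR : x i ∉ L := fun hl => absurd ((hLIic _).mp hl) (not_le.mpr h)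
            obtain ⟨b, hb1, hb2⟩ := hRmin' (x i) hxiR
            have hpb : p < b := not_le.mp (fun hle => hb1 ((hLIic b).mpr hle))
            exact ⟨b, hpb, hb2⟩
          · exact ⟨p, hpW⟩
        obtain ⟨pl, hpl⟩ := hps O hOopen hOne
        rcases le_or_gt pl p with hle | hlt
        · -- nbhd of pl contained in Iic p
          obtain ⟨U', hU'o, hplU', hU'le⟩ :
              ∃ U', IsOpen U' ∧ pl ∈ U' ∧ ∀ z ∈ U', z ≤ p := by
            rcases eq_or_lt_of_le hle with rfl | hlt'
            · exact ⟨W, hB.isOpen hWB, hpW, hWp⟩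
            · obtain ⟨U', hU'o, hplU', hU'lt⟩ := sepLt pl p hlt'
              exact ⟨U', hU'o, hplU', fun z hz => (hU'lt z hz).le⟩
          refine noLim O pl U' hU'o hplU' ?_ hpl
          refine Filter.mem_of_superset hA fun i hi => ?_
          rw [Set.mem_setOf_eq] at hi ⊢
          rw [hOdef]
          dsimp only
          rw [if_pos hi]
          apply Set.eq_empty_iff_forall_notMem.mpr
          rintro z ⟨hz1, hz2⟩
          exact absurd (hU'le z hz1) (not_le.mpr hz2.1)
        · have hplR : pl ∉ L := fun hl => absurd ((hLIic _).mp hl) (not_le.mpr hlt)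
          obtain ⟨b, hbR, hbpl⟩ := hRmin' pl hplR
          have hpb : p < b := not_le.mp (fun hle => hbR ((hLIic b).mpr hle))
          obtain ⟨U', hU'o, hplU', hU'gt⟩ := sepGt b pl hbpl
          refine noLim O pl U' hU'o hplU' ?_ hpl
          refine Filter.mem_of_superset (hRmem b hbR) fun i hi => ?_
          rw [Set.mem_setOf_eq] at hi ⊢
          apply Set.eq_empty_iff_forall_notMem.mpr
          rintro z ⟨hz1, hz2⟩
          have hzb : b < z := hU'gt z hz1
          rw [hOdef] at hz2
          dsimp only at hz2
          split at hz2
          · exact absurd (lt_trans hz2.2 hi) (not_lt.mpr hzb.le)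
          · exact absurd (le_trans (hWp z hz2) hpb.le) (not_le.mpr hzb)
    · push_neg at hLmax
      have hLmax' : ∀ m ∈ L, ∃ a ∈ L, m < a := by
        intro m hm
        obtain ⟨a, ha1, ha2⟩ := hLmax m hm
        exact ⟨a, ha1, ha2⟩
      by_cases hRmin : ∃ m, m ∉ L ∧ ∀ b, b ∉ L → m ≤ b
      · obtain ⟨q, hqR, hqmin⟩ := hRmin
        obtain ⟨U, hUo, hqU, hUD⟩ := hno' q
        obtain ⟨W, hWB, hqW, hWU⟩ := hB.exists_subset_of_mem_open hqU hUo
        have hWD : {i | x i ∈ W} ∉ D := fun h =>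
          hUD (Filter.mem_of_superset h fun i hi => hWU hi)
        have hWq : ∀ y ∈ W, q ≤ y := by
          intro y hy
          by_contra h
          push_neg at h
          have hyL : y ∈ L := by
            by_contra hyR
            exact absurd (hqmin y hyR) (not_le.mpr h)
          refine hWD (Filter.mem_of_superset
            (Filter.inter_mem ((hLmem y).mp hyL) (hRmem q hqR)) ?_)
          rintro i ⟨h1, h2⟩
          exact (hconv W hWB).out hy hqW ⟨h1, h2.le⟩
        have hxiL : ∀ i, x i < q → x i ∈ L := by
          intro i h
          by_contra hr
          exact absurd (hqmin _ hr) (not_le.mpr h)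
        set O : I → Set X := fun i => if x i < q then Ioo (x i) q else W with hOdef
        have hOopen : ∀ i, IsOpen (O i) := by
          intro i
          rw [hOdef]
          dsimp only
          split
          · rw [← Set.Ioi_inter_Iio]
            exact (hIoi _).inter (hIio q)
          · exact hB.isOpen hWB
        have hOne : ∀ i, (O i).Nonempty := by
          intro i
          rw [hOdef]
          dsimp only
          split
          · rename_i h
            obtain ⟨a, haL, ha⟩ := hLmax' (x i) (hxiL i h)
            exact ⟨a, ha, hLR a haL q hqR⟩
          · exact ⟨q, hqW⟩
        obtain ⟨pl, hpl⟩ := hps O hOopen hOne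
        rcases lt_or_ge pl q with hlt | hle
        · have hplL : pl ∈ L := by
            by_contra hr
            exact absurd (hqmin _ hr) (not_le.mpr hlt)
          obtain ⟨a, haL, hpla⟩ := hLmax' pl hplL
          obtain ⟨U', hU'o, hplU', hU'lt⟩ := sepLt pl a hpla
          refine noLim O pl U' hU'o hplU' ?_ hpl
          refine Filter.mem_of_superset ((hLmem a).mp haL) fun i hi => ?_
          rw [Set.mem_setOf_eq] at hi ⊢
          apply Set.eq_empty_iff_forall_notMem.mpr
          rintro z ⟨hz1, hz2⟩
          have hza : z < a := hU'lt z hz1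
          rw [hOdef] at hz2
          dsimp only at hz2
          split at hz2
          · exact absurd (lt_trans hza (lt_of_le_of_lt hi hz2.1)) (lt_irrefl z)
          · exact absurd (hWq z hz2) (not_le.mpr (lt_trans hza (hLR a haL q hqR)))
        · obtain ⟨U', hU'o, hplU', hU'ge⟩ :
              ∃ U', IsOpen U' ∧ pl ∈ U' ∧ ∀ z ∈ U', q ≤ z := by
            rcases eq_or_lt_of_le hle with h | hlt'
            · exact ⟨W, hB.isOpen hWB, h ▸ hqW, hWq⟩
            · obtain ⟨U', hU'o, hplU', hU'gt⟩ := sepGt q pl hlt'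
              exact ⟨U', hU'o, hplU', fun z hz => (hU'gt z hz).le⟩
          refine noLim O pl U' hU'o hplU' ?_ hpl
          refine Filter.mem_of_superset (hRmem q hqR) fun i hi => ?_
          rw [Set.mem_setOf_eq] at hi ⊢
          rw [hOdef]
          dsimp only
          rw [if_pos hi]
          apply Set.eq_empty_iff_forall_notMem.mpr
          rintro z ⟨hz1, hz2⟩
          exact absurd (hU'ge z hz1) (not_le.mpr hz2.2)
      · push_neg at hRmin
        have hRmin' : ∀ m, m ∉ L → ∃ b, b ∉ L ∧ b < m := by
          intro m hm
          obtain ⟨b, hb1, hb2⟩ := hRmin m hm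
          exact ⟨b, hb1, hb2⟩
        have hLopen : IsOpen L := by
          rw [isOpen_iff_forall_mem_open]
          intro a ha
          obtain ⟨a', ha'L, haa'⟩ := hLmax' a ha
          obtain ⟨U', hU'o, haU', hU'lt⟩ := sepLt a a' haa'
          exact ⟨U', fun z hz => hdown a' ha'L z (hU'lt z hz).le, hU'o, haU'⟩
        have hRopen : IsOpen Lᶜ := by
          rw [isOpen_iff_forall_mem_open]
          intro b hb
          obtain ⟨b', hb'R, hb'b⟩ := hRmin' b hb
          obtain ⟨U', hU'o, hbU', hU'gt⟩ := sepGt b' b hb'b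
          refine ⟨U', fun z hz hzL => ?_, hU'o, hbU'⟩
          exact absurd (hLR z hzL b' hb'R) (not_lt.mpr (hU'gt z hz).le)
        set O : I → Set X := fun i =>
          if x i ∈ L then L ∩ Ioi (x i) else Lᶜ ∩ Iio (x i) with hOdef
        have hOopen : ∀ i, IsOpen (O i) := by
          intro i
          rw [hOdef]
          dsimp only
          split
          · exact hLopen.inter (hIoi _)
          · exact hRopen.inter (hIio _)
        have hOne : ∀ i, (O i).Nonempty := by
          intro i
          rw [hOdef]
          dsimp only
          split
          · rename_i h
            obtain ⟨a, ha1, ha2⟩ := hLmax' (x i) h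
            exact ⟨a, ha1, ha2⟩
          · rename_i h
            obtain ⟨b, hb1, hb2⟩ := hRmin' (x i) h
            exact ⟨b, hb1, hb2⟩
        obtain ⟨pl, hpl⟩ := hps O hOopen hOne
        by_cases hplL : pl ∈ L
        · obtain ⟨a, haL, hpla⟩ := hLmax' pl hplL
          obtain ⟨U', hU'o, hplU', hU'lt⟩ := sepLt pl a hpla
          refine noLim O pl U' hU'o hplU' ?_ hpl
          refine Filter.mem_of_superset ((hLmem a).mp haL) fun i hi => ?_
          rw [Set.mem_setOf_eq] at hi ⊢
          apply Set.eq_empty_iff_forall_notMem.mpr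
          rintro z ⟨hz1, hz2⟩
          have hza : z < a := hU'lt z hz1
          rw [hOdef] at hz2
          dsimp only at hz2
          split at hz2
          · exact absurd (lt_trans hza (lt_of_le_of_lt hi hz2.2)) (lt_irrefl z)
          · exact hz2.1 (hdown a haL z hza.le)
        · obtain ⟨b, hbR, hbpl⟩ := hRmin' pl hplL
          obtain ⟨U', hU'o, hplU', hU'gt⟩ := sepGt b pl hbpl
          refine noLim O pl U' hU'o hplU' ?_ hpl
          refine Filter.mem_of_superset (hRmem b hbR) fun i hi => ?_
          rw [Set.mem_setOf_eq] at hi ⊢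
          apply Set.eq_empty_iff_forall_notMem.mpr
          rintro z ⟨hz1, hz2⟩
          have hzb : b < z := hU'gt z hz1
          rw [hOdef] at hz2
          dsimp only at hz2
          split at hz2
          · exact absurd (hLR z hz2.1 b hbR) (not_lt.mpr hzb.le)
          · exact absurd (lt_trans hz2.2 hi) (not_lt.mpr hzb.le)
end

section
/- Let D be an ultrafilter on a set I and let X be a GO space. Then X is D-compact if and only if X is [ν,ν]-compact for every infinite regular cardinal ν such that D is ν-decomposable. -/
universe u v

open Set Cardinal Filter Topology TopologicalSpace

theorem myTypeToType (o : Ordinal.{u}) :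
    @Ordinal.type o.ToType (· < ·) isWellOrder_lt = o := Ordinal.type_toType o

/-- The ultrafilter `D` is `ν`-decomposable (aux copy of the pinned definition). -/
theorem decomposable_def {I : Type v} (D : Ultrafilter I) (ν : Cardinal.{u})
    (f : I → ν.ord.ToType) (h : ∀ S : Set ν.ord.ToType, #S < ν → f ⁻¹' S ∉ D) :
    ∃ f : I → ν.ord.ToType, ∀ S : Set ν.ord.ToType, #S < ν → f ⁻¹' S ∉ D := ⟨f, h⟩

theorem side_lemma {I : Type v} (D : Ultrafilter I) {X : Type u} [LinearOrder X]
    [TopologicalSpace X] (x : I → X) (A B : Set X)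
    (hAopen : IsOpen A) (hUnion : ∀ z : X, z ∈ A ∨ z ∈ B)
    (hAB : ∀ a ∈ A, ∀ b ∈ B, a < b)
    (hBne : B.Nonempty) (hBnomin : ∀ m ∈ B, ∃ b ∈ B, b < m)
    (hIoiOpen : ∀ z : X, IsOpen (Set.Ioi z))
    (hA : {i | x i ∈ A} ∉ D)
    (hBF : ∀ b ∈ B, {i | x i < b} ∈ D)
    (hcomp : ∀ ν : Cardinal.{u}, ℵ₀ ≤ ν → ν.IsRegular → Decomposable D ν →
      NuNuCompact X ν) :
    False := by
  classical
  -- the coinitiality of `B`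
  set 𝒮 : Set Cardinal.{u} :=
    {c | ∃ S : Set X, S ⊆ B ∧ (∀ b ∈ B, ∃ s ∈ S, s ≤ b) ∧ c = #S} with h𝒮
  have h𝒮ne : 𝒮.Nonempty := ⟨#B, B, subset_rfl, fun b hb => ⟨b, hb, le_rfl⟩, rfl⟩
  set ν : Cardinal.{u} := sInf 𝒮 with hν
  obtain ⟨S, hSB, hScoi, hScard⟩ := csInf_mem h𝒮ne
  rw [← hν] at hScard
  -- sets of size `< ν` are not coinitial in `B`
  have hex : ∀ T : Set X, T ⊆ B → #T < ν → ∃ z ∈ B, ∀ t ∈ T, z < t := by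
    intro T hTB hT
    by_contra h
    push_neg at h
    have : ν ≤ #T := csInf_le' ⟨T, hTB, h, rfl⟩
    exact absurd hT (not_lt.mpr this)
  -- `ν` is infinite
  have hνinf : ℵ₀ ≤ ν := by
    by_contra h
    push_neg at h
    have hSfin : S.Finite := by
      rw [← Cardinal.lt_aleph0_iff_set_finite, ← hScard]; exact h
    obtain ⟨b₀, hb₀⟩ := hBne
    obtain ⟨s₀, hs₀S, _⟩ := hScoi b₀ hb₀
    obtain ⟨m, hmS, hmin⟩ := Set.exists_min_image S id hSfin ⟨s₀, hs₀S⟩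
    obtain ⟨b, hbB, hbm⟩ := hBnomin m (hSB hmS)
    obtain ⟨s, hsS, hsb⟩ := hScoi b hbB
    exact absurd (lt_of_le_of_lt (le_trans (hmin s hsS : m ≤ s) hsb) hbm) (lt_irrefl m)
  have hν0 : ν ≠ 0 := fun hc => by
    rw [hc] at hνinf
    exact absurd (lt_of_lt_of_le aleph0_pos (le_of_eq rfl)) (by simpa using hνinf)
  set κ := ν.ord.ToType with hκdef
  have hκcard : #κ = ν := by rw [hκdef, mk_toType, Cardinal.card_ord]
  have hκne : Nonempty κ := Cardinal.mk_ne_zero_iff.mp (by rw [hκcard]; exact hν0)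
  -- enumeration of `S`
  obtain ⟨es⟩ : Nonempty (κ ≃ S) := Cardinal.eq.mp (by rw [hκcard, hScard])
  have hsS : ∀ β : κ, ((es β : X)) ∈ S := fun β => (es β).2
  -- the cardinality of initial segments of `κ`
  have hIio : ∀ β : κ, #(Iio β) < ν := fun β => Cardinal.mk_Iio_ord_toType β
  have hIic : ∀ β : κ, #(Iic β) < ν := by
    intro β
    rw [← Set.Iio_insert]
    exact lt_of_le_of_lt (Cardinal.mk_insert_le)
      (Cardinal.add_lt_of_lt hνinf (hIio β) (lt_of_lt_of_le one_lt_aleph0 hνinf))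
  have wf : WellFounded ((· < ·) : κ → κ → Prop) := wellFounded_lt
  -- recursive construction of a strictly decreasing coinitial sequence in `B`
  have exB : ∀ (β : κ) (ih : ∀ γ, γ < β → {z : X // z ∈ B}),
      ∃ z, z ∈ B ∧ (∀ γ (h : γ < β), z < (ih γ h).val) ∧ z < (es β : X) := by
    intro β ih
    set T : Set X := insert ((es β : X)) (Set.range fun p : Iio β => (ih p.1 p.2).val) with hT
    have hTB : T ⊆ B := by
      rintro t (rfl | ⟨p, rfl⟩)
      · exact hSB (hsS β)
      · exact (ih p.1 p.2).2
    have hTcard : #T < ν := by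
      refine lt_of_le_of_lt Cardinal.mk_insert_le ?_
      exact Cardinal.add_lt_of_lt hνinf
        (lt_of_le_of_lt Cardinal.mk_range_le (hIio β))
        (lt_of_lt_of_le one_lt_aleph0 hνinf)
    obtain ⟨z, hzB, hz⟩ := hex T hTB hTcard
    exact ⟨z, hzB, fun γ h => hz _ (Set.mem_insert_iff.mpr (Or.inr ⟨⟨γ, h⟩, rfl⟩)),
      hz _ (Set.mem_insert _ _)⟩
  set F : ∀ β : κ, (∀ γ, γ < β → {z : X // z ∈ B}) → {z : X // z ∈ B} :=
    fun β ih => ⟨(exB β ih).choose, (exB β ih).choose_spec.1⟩ with hF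
  set b : κ → {z : X // z ∈ B} := fun β => wf.fix F β with hb
  have hbspec : ∀ β : κ, (∀ γ, γ < β → (b β).val < (b γ).val) ∧ (b β).val < (es β : X) := by
    intro β
    have heq : b β = F β (fun γ _ => b γ) := wf.fix_eq F β
    have h2 := (exB β (fun γ _ => b γ)).choose_spec.2
    rw [hF] at heq
    rw [heq]
    exact h2
  have hbB : ∀ β : κ, (b β).val ∈ B := fun β => (b β).2
  have hbdec : ∀ {γ β : κ}, γ < β → (b β).val < (b γ).val := fun {γ β} h =>
    (hbspec β).1 γ h
  have hble : ∀ {γ β : κ}, γ ≤ β → (b β).val ≤ (b γ).val := by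
    intro γ β h
    rcases eq_or_lt_of_le h with rfl | h
    · exact le_rfl
    · exact (hbdec h).le
  have hbcoi : ∀ z ∈ B, ∃ β : κ, (b β).val ≤ z := by
    intro z hz
    obtain ⟨t, htS, htz⟩ := hScoi z hz
    refine ⟨es.symm ⟨t, htS⟩, ?_⟩
    have := (hbspec (es.symm ⟨t, htS⟩)).2
    rw [Equiv.apply_symm_apply] at this
    exact le_trans this.le htz
  -- `ν` is regular
  have hcof : ν ≤ ν.ord.cof := by
    rw [← Ordinal.cof_toType, Order.le_cof_iff]
    intro T hTub
    refine le_trans (csInf_le' ⟨(fun β => (b β).val) '' T, ?_, ?_, rfl⟩) Cardinal.mk_image_le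
    · rintro _ ⟨β, _, rfl⟩; exact hbB β
    · intro z hz
      obtain ⟨β, hβ⟩ := hbcoi z hz
      obtain ⟨γ, hγT, hγ⟩ := hTub β
      exact ⟨(b γ).val, ⟨γ, hγT, rfl⟩, le_trans (hble hγ) hβ⟩
  have hreg : ν.IsRegular := ⟨hνinf, hcof⟩
  have hbdd : ∀ T : Set κ, #T < ν → ∃ γ : κ, ∀ β ∈ T, β < γ := by
    intro T hT
    have : Set.Bounded (· < ·) T := by
      have hc : ¬ IsCofinal T := fun h => absurd (lt_of_lt_of_le hT hcof)
        (not_lt.mpr (by rw [← Ordinal.cof_toType]; exact Order.cof_le h))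
      exact not_isCofinal_iff.mp hc
    exact this
  -- `D` is `ν`-decomposable
  have hdec : ∃ f : I → ν.ord.ToType, ∀ S' : Set ν.ord.ToType, #S' < ν → f ⁻¹' S' ∉ D := by
    obtain ⟨β₀⟩ := hκne
    refine ⟨fun i => if h : ∃ β : κ, (b β).val ≤ x i then
      wf.min {β : κ | (b β).val ≤ x i} h else β₀, ?_⟩
    intro S' hS' hmem
    obtain ⟨γ, hγ⟩ := hbdd S' hS'
    have hsub : (fun i => if h : ∃ β : κ, (b β).val ≤ x i then
        wf.min {β : κ | (b β).val ≤ x i} h else β₀) ⁻¹' S' ⊆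
        {i | x i ∈ A} ∪ {i | (b γ).val ≤ x i} := by
      intro i hi
      simp only [Set.mem_preimage] at hi
      by_cases h : ∃ β : κ, (b β).val ≤ x i
      · rw [dif_pos h] at hi
        have h1 : (b (wf.min {β : κ | (b β).val ≤ x i} h)).val ≤ x i :=
          wf.min_mem {β : κ | (b β).val ≤ x i} h
        have h2 : wf.min {β : κ | (b β).val ≤ x i} h < γ := hγ _ hi
        exact Or.inr (le_trans (hbdec h2).le h1)
      · push_neg at h
        rcases hUnion (x i) with hxa | hxb
        · exact Or.inl hxa
        · obtain ⟨β, hβ⟩ := hbcoi (x i) hxb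
          exact absurd hβ (not_le.mpr (h β))
    have hunion : {i | x i ∈ A} ∪ {i | (b γ).val ≤ x i} ∈ D :=
      Filter.mem_of_superset hmem hsub
    rcases Ultrafilter.union_mem_iff.mp hunion with h | h
    · exact hA h
    · have hc : {i | x i < (b γ).val} ∈ D := hBF _ (hbB γ)
      have : ({i | x i < (b γ).val} ∩ {i | (b γ).val ≤ x i}) ∈ D := Filter.inter_mem hc h
      obtain ⟨i, hi1, hi2⟩ := Filter.nonempty_of_mem this
      exact absurd hi1 (not_lt.mpr hi2)
  -- the bad cover
  have hNN := hcomp ν hνinf hreg hdec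
  set 𝒰 : Set (Set X) := insert A (Set.range fun β : κ => Set.Ioi (b β).val) with h𝒰
  have hopen : ∀ U ∈ 𝒰, IsOpen U := by
    rintro U (rfl | ⟨β, rfl⟩)
    · exact hAopen
    · exact hIoiOpen _
  have hsucc : ∀ β : κ, ∃ β' : κ, β < β' := by
    intro β
    by_contra h
    push_neg at h
    have huniv : (Set.univ : Set κ) ⊆ Iic β := fun γ _ => h γ
    have : #(Set.univ : Set κ) ≤ #(Iic β) := Cardinal.mk_le_mk_of_subset huniv
    rw [Cardinal.mk_univ, hκcard] at this
    exact absurd this (not_le.mpr (hIic β))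
  have hcover : ⋃₀ 𝒰 = Set.univ := by
    ext z
    simp only [Set.mem_sUnion, Set.mem_univ, iff_true]
    rcases hUnion z with hz | hz
    · exact ⟨A, Set.mem_insert _ _, hz⟩
    · obtain ⟨β, hβ⟩ := hbcoi z hz
      obtain ⟨β', hβ'⟩ := hsucc β
      exact ⟨Set.Ioi (b β').val, Set.mem_insert_iff.mpr (Or.inr ⟨β', rfl⟩),
        lt_of_lt_of_le (hbdec hβ') hβ⟩
  have hcard : #𝒰 ≤ ν := by
    refine le_trans Cardinal.mk_insert_le ?_
    have h1 : #(Set.range fun β : κ => Set.Ioi (b β).val) ≤ ν := by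
      refine le_trans Cardinal.mk_range_le ?_
      rw [hκcard]
    calc #(Set.range fun β : κ => Set.Ioi (b β).val) + 1 ≤ ν + 1 := by
          exact add_le_add_left h1 1
      _ ≤ ν + ν := add_le_add_right (le_trans (le_of_lt one_lt_aleph0) hνinf) ν
      _ = ν := Cardinal.add_eq_self hνinf
  obtain ⟨𝒱, h𝒱𝒰, h𝒱card, h𝒱cover⟩ := hNN 𝒰 hopen hcover hcard
  set T : Set κ := {β | Set.Ioi (b β).val ∈ 𝒱} with hTdef
  have hTinj : ∀ β γ : κ, Set.Ioi (b β).val = Set.Ioi (b γ).val → β = γ := by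
    intro β γ h
    rcases lt_trichotomy β γ with hlt | heq | hgt
    · have hm : (b β).val ∈ Set.Ioi (b γ).val := Set.mem_Ioi.mpr (hbdec hlt)
      rw [← h] at hm
      exact absurd (Set.mem_Ioi.mp hm) (lt_irrefl _)
    · exact heq
    · have hm : (b γ).val ∈ Set.Ioi (b β).val := Set.mem_Ioi.mpr (hbdec hgt)
      rw [h] at hm
      exact absurd (Set.mem_Ioi.mp hm) (lt_irrefl _)
  have hTcard : #T < ν := by
    refine lt_of_le_of_lt ?_ h𝒱card
    refine Cardinal.mk_le_of_injective (f := fun p : T => (⟨Set.Ioi (b p.1).val, p.2⟩ : 𝒱)) ?_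
    intro p q h
    exact Subtype.ext (hTinj _ _ (congrArg Subtype.val h))
  obtain ⟨γ, hγ⟩ := hbdd T hTcard
  have : (b γ).val ∈ ⋃₀ 𝒱 := h𝒱cover ▸ Set.mem_univ _
  obtain ⟨V, hV𝒱, hmemV⟩ := this
  rcases h𝒱𝒰 hV𝒱 with rfl | ⟨β, rfl⟩
  · exact absurd (hAB _ hmemV _ (hbB γ)) (lt_irrefl _)
  · have hβT : β ∈ T := hV𝒱
    have h1 : β < γ := hγ β hβT
    exact absurd (lt_trans hmemV (hbdec h1)) (lt_irrefl _)

theorem go_isOpen_Ioi_s8 {X : Type u} [LinearOrder X] [TopologicalSpace X] [T2Space X]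
    {𝓑 : Set (Set X)} (hB : IsTopologicalBasis 𝓑) (hconv : ∀ s ∈ 𝓑, s.OrdConnected) (a : X) :
    IsOpen (Set.Ioi a) := by
  rw [isOpen_iff_forall_mem_open]
  intro z hz
  obtain ⟨U, W, hU, hW, haU, hzW, hUW⟩ := t2_separation (ne_of_lt (Set.mem_Ioi.mp hz))
  obtain ⟨V, hV𝓑, hzV, hVW⟩ := hB.exists_subset_of_mem_open hzW hW
  refine ⟨V, ?_, hB.isOpen hV𝓑, hzV⟩
  intro v hv
  by_contra hva
  have haV : a ∈ V := (hconv V hV𝓑).out hv hzV ⟨not_lt.mp hva, (Set.mem_Ioi.mp hz).le⟩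
  exact (Set.disjoint_left.mp hUW haU) (hVW haV)

theorem go_isOpen_Iio_s8 {X : Type u} [LinearOrder X] [TopologicalSpace X] [T2Space X]
    {𝓑 : Set (Set X)} (hB : IsTopologicalBasis 𝓑) (hconv : ∀ s ∈ 𝓑, s.OrdConnected) (a : X) :
    IsOpen (Set.Iio a) := by
  rw [isOpen_iff_forall_mem_open]
  intro z hz
  obtain ⟨U, W, hU, hW, haU, hzW, hUW⟩ := t2_separation (ne_of_gt (Set.mem_Iio.mp hz))
  obtain ⟨V, hV𝓑, hzV, hVW⟩ := hB.exists_subset_of_mem_open hzW hW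
  refine ⟨V, ?_, hB.isOpen hV𝓑, hzV⟩
  intro v hv
  by_contra hva
  have haV : a ∈ V := (hconv V hV𝓑).out hzV hv ⟨(Set.mem_Iio.mp hz).le, not_lt.mp hva⟩
  exact (Set.disjoint_left.mp hUW haU) (hVW haV)

theorem forward_lemma {I : Type v} (D : Ultrafilter I) (X : Type u) [TopologicalSpace X]
    (hDC : DCompact D X) (ν : Cardinal.{u}) (hν : ℵ₀ ≤ ν)
    (hdec : Decomposable D ν) :
    NuNuCompact X ν := by
  classical
  intro 𝒰 hopen hcover hcard
  by_contra hno
  push_neg at hno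
  rcases isEmpty_or_nonempty X with hX | hX
  · exact hno ∅ (Set.empty_subset _)
      (by rw [Cardinal.mk_emptyCollection]; exact lt_of_lt_of_le aleph0_pos hν)
      (by rw [Set.sUnion_empty]; exact (Set.univ_eq_empty_iff.mpr hX).symm)
  set κ := ν.ord.ToType with hκdef
  have hκcard : #κ = ν := by rw [hκdef, mk_toType, Cardinal.card_ord]
  obtain ⟨fd, hf⟩ := hdec
  obtain ⟨pt⟩ := hX
  obtain ⟨U₀, hU₀, hptU₀⟩ : pt ∈ ⋃₀ 𝒰 := hcover.symm ▸ Set.mem_univ pt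
  haveI h𝒰ne : Nonempty ↥𝒰 := ⟨⟨U₀, hU₀⟩⟩
  obtain ⟨ι⟩ : Nonempty (↥𝒰 ↪ κ) := by
    rw [← Cardinal.le_def, hκcard]; exact hcard
  set g : κ → ↥𝒰 := Function.invFun ι with hg
  have hgι : ∀ u : ↥𝒰, g (ι u) = u := Function.leftInverse_invFun ι.injective
  have hchoice : ∀ β : κ, ∃ z : X, z ∉ ⋃₀ (Subtype.val '' (g '' Iic β)) := by
    intro β
    have hsub : Subtype.val '' (g '' Iic β) ⊆ 𝒰 := by
      rintro _ ⟨u, _, rfl⟩; exact u.2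
    have hcard' : #(Subtype.val '' (g '' Iic β)) < ν := by
      refine lt_of_le_of_lt Cardinal.mk_image_le (lt_of_le_of_lt Cardinal.mk_image_le ?_)
      rw [← Set.Iio_insert]
      exact lt_of_le_of_lt Cardinal.mk_insert_le
        (Cardinal.add_lt_of_lt hν (Cardinal.mk_Iio_ord_toType β)
          (lt_of_lt_of_le one_lt_aleph0 hν))
    exact (Set.ne_univ_iff_exists_notMem _).mp (hno _ hsub hcard')
  choose c hc using hchoice
  obtain ⟨p, hp⟩ := hDC (fun i => c (fd i))
  obtain ⟨U, hU𝒰, hpU⟩ : p ∈ ⋃₀ 𝒰 := hcover.symm ▸ Set.mem_univ p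
  set γ : κ := ι ⟨U, hU𝒰⟩ with hγ
  have hD : {i | c (fd i) ∈ U} ∈ D := hp U (hopen U hU𝒰) hpU
  have hsub : {i | c (fd i) ∈ U} ⊆ fd ⁻¹' (Iio γ) := by
    intro i hi
    simp only [Set.mem_preimage, Set.mem_Iio]
    by_contra h
    exact hc (fd i) ⟨U, ⟨⟨U, hU𝒰⟩, ⟨γ, Set.mem_Iic.mpr (not_lt.mp h), hgι ⟨U, hU𝒰⟩⟩, rfl⟩, hi⟩
  exact hf (Iio γ) (Cardinal.mk_Iio_ord_toType γ) (Filter.mem_of_superset hD hsub)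

/-- A GO space is `D`-compact iff it is `[ν, ν]`-compact for every infinite regular
cardinal `ν` such that `D` is `ν`-decomposable. -/
theorem stmt8 {I : Type v} (D : Ultrafilter I)
    (X : Type u) [LinearOrder X] [TopologicalSpace X] [T2Space X]
    (hGO : ∃ 𝓑 : Set (Set X), IsTopologicalBasis 𝓑 ∧ ∀ s ∈ 𝓑, s.OrdConnected) :
    DCompact D X ↔
      ∀ ν : Cardinal.{u}, ℵ₀ ≤ ν → ν.IsRegular → Decomposable D ν → NuNuCompact X ν := by
  classical
  obtain ⟨𝓑, h𝓑, h𝓑conv⟩ := hGO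
  constructor
  · intro hDC ν hν hreg hdec
    exact forward_lemma D X hDC ν hν hdec
  · intro hcomp x
    have hIoi : ∀ a : X, IsOpen (Set.Ioi a) := go_isOpen_Ioi_s8 h𝓑 h𝓑conv
    have hIio : ∀ a : X, IsOpen (Set.Iio a) := go_isOpen_Iio_s8 h𝓑 h𝓑conv
    by_cases hsing : ∃ z : X, {i | x i < z} ∉ D ∧ {i | z < x i} ∉ D
    · obtain ⟨z, h1, h2⟩ := hsing
      refine ⟨z, fun U hU hzU => ?_⟩
      have h3 : {i | x i < z}ᶜ ∈ D := Ultrafilter.compl_mem_iff_notMem.mpr h1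
      have h4 : {i | z < x i}ᶜ ∈ D := Ultrafilter.compl_mem_iff_notMem.mpr h2
      refine Filter.mem_of_superset (Filter.inter_mem h3 h4) ?_
      intro i hi
      have hxz : x i = z := le_antisymm (not_lt.mp hi.2) (not_lt.mp hi.1)
      show x i ∈ U
      rw [hxz]
      exact hzU
    · push_neg at hsing
      set A : Set X := {z : X | {i | z < x i} ∈ D} with hAdef
      set B : Set X := {z : X | {i | x i < z} ∈ D} with hBdef
      have htot : ∀ z : X, z ∈ A ∨ z ∈ B := by
        intro z
        by_cases hz : {i | x i < z} ∈ D
        · exact Or.inr hz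
        · exact Or.inl (hsing z hz)
      have hne' : ∀ s t : Set I, s ∈ D → t ∈ D → (s ∩ t).Nonempty := fun s t hs ht =>
        Filter.nonempty_of_mem (Filter.inter_mem hs ht)
      have hABlt : ∀ a ∈ A, ∀ b ∈ B, a < b := by
        intro a ha b hb
        by_contra h
        obtain ⟨i, hi1, hi2⟩ := hne' _ _ ha hb
        exact h (lt_trans hi1 hi2)
      have hdownA : ∀ z ∈ A, ∀ w, w ≤ z → w ∈ A := by
        intro z hz w hw
        exact Filter.mem_of_superset hz (fun i hi => lt_of_le_of_lt hw hi)
      have hupB : ∀ z ∈ B, ∀ w, z ≤ w → w ∈ B := by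
        intro z hz w hw
        exact Filter.mem_of_superset hz (fun i hi => lt_of_lt_of_le hi hw)
      have hBF : ∀ b ∈ B, {i | x i < b} ∈ D := fun b hb => hb
      have hAF : ∀ a ∈ A, {i | a < x i} ∈ D := fun a ha => ha
      have hsideB : IsOpen A → (∀ m ∈ B, ∃ b ∈ B, b < m) → B.Nonempty →
          ({i | x i ∈ A} ∉ D) → False := by
        intro hAopen hBnomin hBne hAnotD
        exact side_lemma D x A B hAopen htot hABlt hBne hBnomin hIoi hAnotD hBF hcomp
      have hsideA : IsOpen B → (∀ m ∈ A, ∃ a ∈ A, m < a) → A.Nonempty →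
          ({i | x i ∈ B} ∉ D) → False := by
        intro hBopen hAnomax hAne hBnotD
        exact side_lemma (X := Xᵒᵈ) D x B A hBopen (fun z => (htot z).symm)
          (fun b hb a ha => hABlt a ha b hb) hAne hAnomax
          (fun z => hIio z) hBnotD (fun a ha => ha)
          (fun ν h1 h2 h3 => hcomp ν h1 h2 h3)
      by_cases hAmax : ∃ m ∈ A, ∀ a ∈ A, a ≤ m
      · by_cases hBmin : ∃ m ∈ B, ∀ b ∈ B, m ≤ b
        · obtain ⟨a, haA, hamax⟩ := hAmax
          obtain ⟨b, hbB, hbmin⟩ := hBmin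
          obtain ⟨i, hi1, hi2⟩ := hne' _ _ haA hbB
          rcases htot (x i) with h | h
          · exact absurd (hamax _ h) (not_le.mpr hi1)
          · exact absurd (hbmin _ h) (not_le.mpr hi2)
        · push_neg at hBmin
          obtain ⟨a, haA, hamax⟩ := hAmax
          by_cases hconv : ∀ U : Set X, IsOpen U → a ∈ U → {i | x i ∈ U} ∈ D
          · exact ⟨a, hconv⟩
          push_neg at hconv
          obtain ⟨U, hUo, haU, hUD⟩ := hconv
          obtain ⟨V, hV𝓑, haV, hVU⟩ := h𝓑.exists_subset_of_mem_open haU hUo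
          have hVD : {i | x i ∈ V} ∉ D := fun h =>
            hUD (Filter.mem_of_superset h (fun i hi => hVU hi))
          have hVB : ∀ v ∈ V, v ∉ B := by
            intro v hv hvB
            apply hVD
            refine Filter.mem_of_superset (Filter.inter_mem (hAF a haA) (hBF v hvB)) ?_
            rintro i ⟨hi1, hi2⟩
            exact (h𝓑conv V hV𝓑).out haV hv ⟨le_of_lt hi1, le_of_lt hi2⟩
          have hAopen : IsOpen A := by
            rw [isOpen_iff_forall_mem_open]
            intro z hz
            rcases eq_or_lt_of_le (hamax z hz) with heq | hlt
            · exact ⟨V, fun v hv => (htot v).resolve_right (hVB v hv), h𝓑.isOpen hV𝓑,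
                heq ▸ haV⟩
            · exact ⟨Set.Iio a, fun w hw => hdownA a haA w (le_of_lt hw), hIio a, hlt⟩
          have hBne : B.Nonempty := by
            obtain ⟨i, hi⟩ := Filter.nonempty_of_mem (hAF a haA)
            refine ⟨x i, (htot (x i)).resolve_left ?_⟩
            intro hxa
            exact absurd (hamax _ hxa) (not_le.mpr hi)
          have hAnotD : {i | x i ∈ A} ∉ D := by
            intro h
            obtain ⟨i, hi1, hi2⟩ := hne' _ _ h (hAF a haA)
            exact absurd (hamax _ hi1) (not_le.mpr hi2)
          exact (hsideB hAopen hBmin hBne hAnotD).elim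
      · push_neg at hAmax
        by_cases hBmin : ∃ m ∈ B, ∀ b ∈ B, m ≤ b
        · obtain ⟨m, hmB, hmmin⟩ := hBmin
          by_cases hconv : ∀ U : Set X, IsOpen U → m ∈ U → {i | x i ∈ U} ∈ D
          · exact ⟨m, hconv⟩
          push_neg at hconv
          obtain ⟨U, hUo, hmU, hUD⟩ := hconv
          obtain ⟨V, hV𝓑, hmV, hVU⟩ := h𝓑.exists_subset_of_mem_open hmU hUo
          have hVD : {i | x i ∈ V} ∉ D := fun h =>
            hUD (Filter.mem_of_superset h (fun i hi => hVU hi))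
          have hVA : ∀ v ∈ V, v ∉ A := by
            intro v hv hvA
            apply hVD
            refine Filter.mem_of_superset (Filter.inter_mem (hAF v hvA) (hBF m hmB)) ?_
            rintro i ⟨hi1, hi2⟩
            exact (h𝓑conv V hV𝓑).out hv hmV ⟨le_of_lt hi1, le_of_lt hi2⟩
          have hBopen : IsOpen B := by
            rw [isOpen_iff_forall_mem_open]
            intro z hz
            rcases eq_or_lt_of_le (hmmin z hz) with heq | hlt
            · exact ⟨V, fun v hv => (htot v).resolve_left (hVA v hv), h𝓑.isOpen hV𝓑,
                heq ▸ hmV⟩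
            · exact ⟨Set.Ioi m, fun w hw => hupB m hmB w (le_of_lt hw), hIoi m, hlt⟩
          have hAne : A.Nonempty := by
            obtain ⟨i, hi⟩ := Filter.nonempty_of_mem (hBF m hmB)
            refine ⟨x i, (htot (x i)).resolve_right ?_⟩
            intro hxb
            exact absurd (hmmin _ hxb) (not_le.mpr hi)
          have hBnotD : {i | x i ∈ B} ∉ D := by
            intro h
            obtain ⟨i, hi1, hi2⟩ := hne' _ _ h (hBF m hmB)
            exact absurd (hmmin _ hi1) (not_le.mpr hi2)
          exact (hsideA hBopen hAmax hAne hBnotD).elim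
        · push_neg at hBmin
          have hAopen : IsOpen A := by
            rw [isOpen_iff_forall_mem_open]
            intro z hz
            obtain ⟨a, haA, hza⟩ := hAmax z hz
            exact ⟨Set.Iio a, fun w hw => hdownA a haA w (le_of_lt hw), hIio a, hza⟩
          have hBopen : IsOpen B := by
            rw [isOpen_iff_forall_mem_open]
            intro z hz
            obtain ⟨b, hbB, hbz⟩ := hBmin z hz
            exact ⟨Set.Ioi b, fun w hw => hupB b hbB w (le_of_lt hw), hIoi b, hbz⟩
          by_cases hBD : {i | x i ∈ B} ∈ D
          · have hAnotD : {i | x i ∈ A} ∉ D := by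
              intro h
              obtain ⟨i, hi1, hi2⟩ := hne' _ _ h hBD
              exact absurd (hABlt _ hi1 _ hi2) (lt_irrefl _)
            obtain ⟨i, hi⟩ := Filter.nonempty_of_mem hBD
            exact (hsideB hAopen hBmin ⟨x i, hi⟩ hAnotD).elim
          · have hAD : {i | x i ∈ A} ∈ D := by
              have huniv : {i | x i ∈ A} ∪ {i | x i ∈ B} = Set.univ := by
                ext i
                simp only [Set.mem_union, Set.mem_setOf_eq, Set.mem_univ, iff_true]
                exact htot (x i)
              have hu : Set.univ ∈ (D : Filter I) := Filter.univ_mem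
              rw [← huniv] at hu
              rcases Ultrafilter.union_mem_iff.mp hu with h | h
              · exact h
              · exact absurd h hBD
            obtain ⟨i, hi⟩ := Filter.nonempty_of_mem hAD
            exact (hsideA hBopen hAmax ⟨x i, hi⟩ hBD).elim
end
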